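/- arXiv:1906.09949 — 2 statements merged into one kernel-verified Lean document; each statement's English description precedes it below -/
import Mathlib

section
/- For every ε > 0 there exists q₀ > 0 such that for all 0 < q < q₀ and all 0 < π < q^{2+ε}, setting L = ⌊q^{−1−ε/3}⌋, the ν⊗μ-probability that the box [0,L)² is good is at least 1 − 2q^{ε/3}. -/
open MeasureTheory ProbabilityTheory

/-- Sites of the two-dimensional lattice. -/
abbrev Site : Type := ℤ × ℤ

/-- A joint state assigns to each site a pair of Booleans:
the first component is `true` iff the site is susceptible (environment, law ν),
the second component is the infection coin, `true` iff the coin says infected (law μ). -/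
abbrev EnvCfg : Type := Site → Bool × Bool

/-- A site is susceptible. -/
def Susc (s : EnvCfg) (x : Site) : Prop := (s x).1 = true

/-- A site is infected: it is susceptible and its infection coin is `true`. -/
def Infct (s : EnvCfg) (x : Site) : Prop := (s x).1 = true ∧ (s x).2 = true

/-- The box at coarse-grained site `v`: `L·v + [0,L)²`. -/
def box (L : ℕ) (v : Site) : Set Site :=
  {y | (L : ℤ) * v.1 ≤ y.1 ∧ y.1 < (L : ℤ) * v.1 + L ∧
       (L : ℤ) * v.2 ≤ y.2 ∧ y.2 < (L : ℤ) * v.2 + L}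

/-- A box is good: all its sites are susceptible and each of its `L` rows and each of its
`L` columns contains at least one infected site. -/
def GoodBox (L : ℕ) (s : EnvCfg) (v : Site) : Prop :=
  (∀ y ∈ box L v, Susc s y) ∧
  (∀ j < L, ∃ i < L, Infct s ((L : ℤ) * v.1 + i, (L : ℤ) * v.2 + j)) ∧
  (∀ i < L, ∃ j < L, Infct s ((L : ℤ) * v.1 + i, (L : ℤ) * v.2 + j))

lemma aux_num (ε : ℝ) (hε : 0 < ε) : ∃ q₀ : ℝ, 0 < q₀ ∧ q₀ ≤ 1/2 ∧ ∀ q : ℝ, 0 < q → q < q₀ →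
    2 * (⌊q ^ (-(1 + ε/3))⌋₊ : ℝ) * (1 - q) ^ (⌊q ^ (-(1 + ε/3))⌋₊) ≤ q ^ (ε/3) := by
  set c : ℝ := 3/ε + 2 with hc
  obtain ⟨T, hT⟩ : ∃ T : ℝ, ∀ b ≥ T, 2 * Real.exp 1 ≤ Real.exp b / b ^ c :=
    (Filter.eventually_atTop).mp
      ((tendsto_exp_div_rpow_atTop c).eventually_ge_atTop (2 * Real.exp 1))
  set M : ℝ := max T 1 with hM
  have hM1 : (1:ℝ) ≤ M := le_max_right _ _
  have hMpos : (0:ℝ) < M := lt_of_lt_of_le one_pos hM1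
  refine ⟨min (1/2) (M ^ (-(3/ε))), lt_min (by norm_num) (Real.rpow_pos_of_pos hMpos _),
    min_le_left _ _, ?_⟩
  intro q hq hqlt
  have hqhalf : q ≤ 1/2 := le_of_lt (lt_of_lt_of_le hqlt (min_le_left _ _))
  have hqM : q < M ^ (-(3/ε)) := lt_of_lt_of_le hqlt (min_le_right _ _)
  set t : ℝ := q ^ (-(ε/3)) with ht
  have htpos : 0 < t := Real.rpow_pos_of_pos hq _
  have htM : M < t := by
    have h1 : q ^ (ε/3) < (M ^ (-(3/ε))) ^ (ε/3) :=
      Real.rpow_lt_rpow hq.le hqM (by positivity)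
    have h2 : (M ^ (-(3/ε))) ^ (ε/3) = M⁻¹ := by
      rw [← Real.rpow_mul hMpos.le]
      have h3 : (-(3/ε)) * (ε/3) = -1 := by field_simp
      rw [h3, Real.rpow_neg_one]
    rw [h2] at h1
    have h3 := inv_strictAnti₀ (Real.rpow_pos_of_pos hq (ε/3)) h1
    rwa [inv_inv, ← Real.rpow_neg hq.le] at h3
  have htT : T ≤ t := le_of_lt (lt_of_le_of_lt (le_max_left _ _) htM)
  have ht1 : 1 < t := lt_of_le_of_lt hM1 htM
  have htc : 0 < t ^ c := Real.rpow_pos_of_pos htpos _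
  have hexp : 2 * Real.exp 1 * t ^ c ≤ Real.exp t := by
    have h := hT t htT
    rw [le_div_iff₀ htc] at h
    linarith
  set L : ℕ := ⌊q ^ (-(1 + ε/3))⌋₊ with hLdef
  set a : ℝ := q ^ (-(1 + ε/3)) with ha
  have hapos : 0 < a := Real.rpow_pos_of_pos hq _
  have hLle : (L : ℝ) ≤ a := Nat.floor_le hapos.le
  have hLgt : a - 1 < (L : ℝ) := Nat.sub_one_lt_floor a
  have hq1 : 0 ≤ 1 - q := by linarith
  have hqa : q * a = t := by
    rw [ha, ht]
    nth_rewrite 1 [← Real.rpow_one q]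
    rw [← Real.rpow_add hq]
    congr 1; ring
  have hpow : (1-q)^L ≤ Real.exp (1 - t) := by
    have h1 : (1-q)^L ≤ Real.exp (-q) ^ L :=
      pow_le_pow_left₀ hq1 (by have := Real.add_one_le_exp (-q); linarith) L
    have h2 : Real.exp (-q) ^ L = Real.exp (-(q * L)) := by
      rw [← Real.exp_nat_mul]; ring_nf
    have h3 : t - 1 ≤ q * L := by nlinarith
    calc (1-q)^L ≤ Real.exp (-(q * L)) := h2 ▸ h1
      _ ≤ Real.exp (1 - t) := Real.exp_le_exp.mpr (by linarith)
  have hkey : 2 * Real.exp (1 - t) ≤ q ^ (1 + 2*ε/3) := by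
    have h4 : q ^ (1 + 2*ε/3) = t ^ (-c) := by
      rw [ht, ← Real.rpow_mul hq.le]
      congr 1
      rw [hc]
      field_simp
    have h5 : 2 * Real.exp (1 - t) = (2 * Real.exp 1) / Real.exp t := by
      rw [Real.exp_sub]; ring
    rw [h4, Real.rpow_neg htpos.le, h5, inv_eq_one_div,
      div_le_div_iff₀ (Real.exp_pos t) htc]
    linarith
  calc 2 * (L:ℝ) * (1-q)^L ≤ 2 * a * Real.exp (1-t) := by
        apply mul_le_mul (by linarith) hpow (pow_nonneg hq1 L) (by positivity)
    _ = a * (2 * Real.exp (1-t)) := by ring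
    _ ≤ a * q ^ (1+2*ε/3) := mul_le_mul_of_nonneg_left hkey hapos.le
    _ = q ^ (ε/3) := by rw [ha, ← Real.rpow_add hq]; congr 1; ring

lemma coin_prod (P : Measure EnvCfg)
    (hInd : iIndepFun (β := fun _ : Site ⊕ Site => Bool)
      (fun i s => Sum.elim (fun x => (s x).1) (fun x => (s x).2) i) P)
    (T : Finset Site) :
    P (⋂ x ∈ T, {s : EnvCfg | (s x).2 = false})
      = ∏ x ∈ T, P {s : EnvCfg | (s x).2 = false} := by
  have h := hInd.meas_biInter (S := T.image Sum.inr)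
    (s := fun k => {s : EnvCfg |
      Sum.elim (fun x => (s x).1) (fun x => (s x).2) k = false})
    (fun k _ => ⟨{false}, trivial, rfl⟩)
  have hinj : Function.Injective (Sum.inr : Site → Site ⊕ Site) := Sum.inr_injective
  rw [Finset.prod_image (fun x _ y _ h => hinj h)] at h
  have heq : (⋂ k ∈ T.image Sum.inr, {s : EnvCfg |
      Sum.elim (fun x => (s x).1) (fun x => (s x).2) k = false})
      = ⋂ x ∈ T, {s : EnvCfg | (s x).2 = false} := by
    ext s
    simp only [Set.mem_iInter, Finset.mem_image, Set.mem_setOf_eq]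
    constructor
    · intro h x hx
      exact h _ ⟨x, hx, rfl⟩
    · rintro h k ⟨x, hx, rfl⟩
      exact h x hx
  rw [heq] at h
  exact h

/-- The joint law ν⊗μ: all the coordinates (environment and coin, over all sites) are
independent, each environment coordinate is immune (not susceptible) with probability π,
and each coin is `true` with probability `q`. -/
theorem goodBox_prob (ε : ℝ) (hε : 0 < ε) :
    ∃ q₀ : ℝ, 0 < q₀ ∧ ∀ q : ℝ, 0 < q → q < q₀ → ∀ π : ℝ, 0 < π → π < q ^ (2 + ε) →
    ∀ P : Measure EnvCfg, IsProbabilityMeasure P →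
    iIndepFun (β := fun _ : Site ⊕ Site => Bool)
      (fun i s => Sum.elim (fun x => (s x).1) (fun x => (s x).2) i) P →
    (∀ x : Site, (P {s | (s x).1 = false}).toReal = π) →
    (∀ x : Site, (P {s | (s x).2 = true}).toReal = q) →
    1 - 2 * q ^ (ε / 3) ≤ (P {s | GoodBox (⌊q ^ (-(1 + ε / 3))⌋₊) s (0, 0)}).toReal := by
  obtain ⟨q₀, hq₀pos, hq₀half, hnum⟩ := aux_num ε hε
  refine ⟨q₀, hq₀pos, ?_⟩
  intro q hq hqlt π hπ hπlt P hP hInd hEnv hCoin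
  haveI := hP
  set L : ℕ := ⌊q ^ (-(1 + ε / 3))⌋₊ with hLdef
  have hqhalf : q ≤ 1/2 := le_of_lt (lt_of_lt_of_le hqlt hq₀half)
  have hq1 : (0:ℝ) ≤ 1 - q := by linarith
  -- measurability of elementary events
  have menv : ∀ x : Site, MeasurableSet {s : EnvCfg | (s x).1 = false} := fun x =>
    (Measurable.fst (measurable_pi_apply x)) (measurableSet_singleton false)
  have mcoinT : ∀ x : Site, MeasurableSet {s : EnvCfg | (s x).2 = true} := fun x =>
    (Measurable.snd (measurable_pi_apply x)) (measurableSet_singleton true)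
  have mcoinF : ∀ x : Site, MeasurableSet {s : EnvCfg | (s x).2 = false} := fun x =>
    (Measurable.snd (measurable_pi_apply x)) (measurableSet_singleton false)
  -- elementary probabilities
  have hPenv : ∀ x : Site, P {s : EnvCfg | (s x).1 = false} = ENNReal.ofReal π := fun x => by
    rw [← hEnv x, ENNReal.ofReal_toReal (measure_ne_top _ _)]
  have hPcoinF : ∀ x : Site, P {s : EnvCfg | (s x).2 = false} = ENNReal.ofReal (1 - q) := by
    intro x
    have hset : {s : EnvCfg | (s x).2 = false} = {s : EnvCfg | (s x).2 = true}ᶜ := by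
      ext s; simp
    have hPT : P {s : EnvCfg | (s x).2 = true} = ENNReal.ofReal q := by
      rw [← hCoin x, ENNReal.ofReal_toReal (measure_ne_top _ _)]
    rw [hset, prob_compl_eq_one_sub (mcoinT x), hPT,
      ENNReal.ofReal_sub 1 hq.le, ENNReal.ofReal_one]
  -- finsets of sites
  set rowT : ℕ → Finset Site := fun j => (Finset.range L).image (fun i : ℕ => ((i:ℤ), (j:ℤ)))
    with hrowT
  set colT : ℕ → Finset Site := fun i => (Finset.range L).image (fun j : ℕ => ((i:ℤ), (j:ℤ)))
    with hcolT
  set SB : Finset Site := ((Finset.range L) ×ˢ (Finset.range L)).image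
    (fun p : ℕ × ℕ => ((p.1:ℤ), (p.2:ℤ))) with hSBdef
  have hmemSB : ∀ i j : ℕ, i < L → j < L → ((i:ℤ), (j:ℤ)) ∈ SB := by
    intro i j hi hj
    exact Finset.mem_image.mpr ⟨(i,j), Finset.mem_product.mpr
      ⟨Finset.mem_range.mpr hi, Finset.mem_range.mpr hj⟩, rfl⟩
  have hrowcard : ∀ j : ℕ, (rowT j).card = L := by
    intro j
    rw [hrowT, Finset.card_image_of_injective _ (fun a b h => by simpa using h)]
    exact Finset.card_range L
  have hcolcard : ∀ i : ℕ, (colT i).card = L := by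
    intro i
    rw [hcolT, Finset.card_image_of_injective _ (fun a b h => by simpa using h)]
    exact Finset.card_range L
  have hSBcard : SB.card = L * L := by
    rw [hSBdef, Finset.card_image_of_injective _ (fun a b h => by
      simp only [Prod.mk.injEq, Nat.cast_inj] at h
      exact Prod.ext h.1 h.2)]
    rw [Finset.card_product, Finset.card_range]
  -- bad events
  set Crow : ℕ → Set EnvCfg := fun j => ⋂ x ∈ rowT j, {s : EnvCfg | (s x).2 = false} with hCrow
  set Ccol : ℕ → Set EnvCfg := fun i => ⋂ x ∈ colT i, {s : EnvCfg | (s x).2 = false} with hCcol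
  set BadE : Set EnvCfg := (⋃ x ∈ SB, {s : EnvCfg | (s x).1 = false}) ∪
    ((⋃ j ∈ Finset.range L, Crow j) ∪ (⋃ i ∈ Finset.range L, Ccol i)) with hBadE
  have mCrow : ∀ j, MeasurableSet (Crow j) := fun j =>
    Finset.measurableSet_biInter _ (fun x _ => mcoinF x)
  have mCcol : ∀ i, MeasurableSet (Ccol i) := fun i =>
    Finset.measurableSet_biInter _ (fun x _ => mcoinF x)
  have mBad : MeasurableSet BadE :=
    (Finset.measurableSet_biUnion _ (fun x _ => menv x)).union
      ((Finset.measurableSet_biUnion _ (fun j _ => mCrow j)).union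
        (Finset.measurableSet_biUnion _ (fun i _ => mCcol i)))
  -- inclusion
  have hsubset : BadEᶜ ⊆ {s : EnvCfg | GoodBox L s (0, 0)} := by
    intro s hs
    rw [Set.mem_compl_iff, hBadE] at hs
    simp only [Set.mem_union, not_or] at hs
    obtain ⟨hA, hB, hC⟩ := hs
    have hAll : ∀ x ∈ SB, (s x).1 = true := by
      intro x hx
      by_contra hcon
      exact hA (Set.mem_iUnion₂.mpr ⟨x, hx, by simpa using hcon⟩)
    have hRow : ∀ j : ℕ, j < L → ∃ i : ℕ, i < L ∧ (s ((i:ℤ),(j:ℤ))).2 = true := by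
      intro j hj
      have h1 : s ∉ Crow j := fun hmem =>
        hB (Set.mem_iUnion₂.mpr ⟨j, Finset.mem_range.mpr hj, hmem⟩)
      have h2 : ¬ ∀ x ∈ rowT j, (s x).2 = false := fun hall =>
        h1 (Set.mem_iInter₂.mpr hall)
      push_neg at h2
      obtain ⟨x, hx, hxval⟩ := h2
      obtain ⟨i, hi, rfl⟩ := Finset.mem_image.mp hx
      exact ⟨i, Finset.mem_range.mp hi, by simpa using hxval⟩
    have hCol : ∀ i : ℕ, i < L → ∃ j : ℕ, j < L ∧ (s ((i:ℤ),(j:ℤ))).2 = true := by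
      intro i hi
      have h1 : s ∉ Ccol i := fun hmem =>
        hC (Set.mem_iUnion₂.mpr ⟨i, Finset.mem_range.mpr hi, hmem⟩)
      have h2 : ¬ ∀ x ∈ colT i, (s x).2 = false := fun hall =>
        h1 (Set.mem_iInter₂.mpr hall)
      push_neg at h2
      obtain ⟨x, hx, hxval⟩ := h2
      obtain ⟨j, hj, rfl⟩ := Finset.mem_image.mp hx
      exact ⟨j, Finset.mem_range.mp hj, by simpa using hxval⟩
    refine ⟨?_, ?_, ?_⟩
    · intro y hy
      obtain ⟨h1, h2, h3, h4⟩ := hy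
      simp only [mul_zero, zero_add] at h1 h2 h3 h4
      have hx : y ∈ SB := by
        refine Finset.mem_image.mpr ⟨(y.1.toNat, y.2.toNat), Finset.mem_product.mpr
          ⟨Finset.mem_range.mpr (by omega), Finset.mem_range.mpr (by omega)⟩, ?_⟩
        exact Prod.ext (by simp; omega) (by simp; omega)
      exact hAll y hx
    · intro j hj
      obtain ⟨i, hi, hcoin⟩ := hRow j hj
      refine ⟨i, hi, ?_⟩
      have heqsite : ((L:ℤ) * (0,0).1 + (i:ℤ), (L:ℤ) * (0,0).2 + (j:ℤ)) = ((i:ℤ), (j:ℤ)) := by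
        simp
      rw [heqsite]
      exact ⟨hAll _ (hmemSB i j hi hj), hcoin⟩
    · intro i hi
      obtain ⟨j, hj, hcoin⟩ := hCol i hi
      refine ⟨j, hj, ?_⟩
      have heqsite : ((L:ℤ) * (0,0).1 + (i:ℤ), (L:ℤ) * (0,0).2 + (j:ℤ)) = ((i:ℤ), (j:ℤ)) := by
        simp
      rw [heqsite]
      exact ⟨hAll _ (hmemSB i j hi hj), hcoin⟩
  -- probabilities of rows/cols
  have hrowP : ∀ j : ℕ, P (Crow j) = ENNReal.ofReal ((1-q)^L) := by
    intro j
    rw [hCrow]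
    rw [coin_prod P hInd (rowT j), Finset.prod_congr rfl (fun x _ => hPcoinF x),
      Finset.prod_const, hrowcard j, ← ENNReal.ofReal_pow hq1]
  have hcolP : ∀ i : ℕ, P (Ccol i) = ENNReal.ofReal ((1-q)^L) := by
    intro i
    rw [hCcol]
    rw [coin_prod P hInd (colT i), Finset.prod_congr rfl (fun x _ => hPcoinF x),
      Finset.prod_const, hcolcard i, ← ENNReal.ofReal_pow hq1]
  -- union bound
  have hb1 : P BadE ≤ ENNReal.ofReal ((L:ℝ)*(L:ℝ)*π + 2*(L:ℝ)*((1-q)^L)) := by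
    have s1 : P (⋃ x ∈ SB, {s : EnvCfg | (s x).1 = false})
        ≤ ENNReal.ofReal ((L:ℝ)*(L:ℝ)*π) := by
      calc P (⋃ x ∈ SB, {s : EnvCfg | (s x).1 = false})
          ≤ ∑ x ∈ SB, P {s : EnvCfg | (s x).1 = false} := measure_biUnion_finset_le _ _
        _ = SB.card • ENNReal.ofReal π := by
            rw [Finset.sum_congr rfl (fun x _ => hPenv x), Finset.sum_const]
        _ = ENNReal.ofReal ((L:ℝ)*(L:ℝ)*π) := by
            rw [hSBcard, nsmul_eq_mul, ← ENNReal.ofReal_natCast (L*L),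
              ← ENNReal.ofReal_mul (by positivity)]
            congr 1
            push_cast
            ring
    have s2 : P (⋃ j ∈ Finset.range L, Crow j) ≤ ENNReal.ofReal ((L:ℝ)*((1-q)^L)) := by
      calc P (⋃ j ∈ Finset.range L, Crow j)
          ≤ ∑ j ∈ Finset.range L, P (Crow j) := measure_biUnion_finset_le _ _
        _ = ENNReal.ofReal ((L:ℝ)*((1-q)^L)) := by
            rw [Finset.sum_congr rfl (fun j _ => hrowP j), Finset.sum_const,
              Finset.card_range, nsmul_eq_mul, ← ENNReal.ofReal_natCast L,
              ← ENNReal.ofReal_mul (by positivity)]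
    have s3 : P (⋃ i ∈ Finset.range L, Ccol i) ≤ ENNReal.ofReal ((L:ℝ)*((1-q)^L)) := by
      calc P (⋃ i ∈ Finset.range L, Ccol i)
          ≤ ∑ i ∈ Finset.range L, P (Ccol i) := measure_biUnion_finset_le _ _
        _ = ENNReal.ofReal ((L:ℝ)*((1-q)^L)) := by
            rw [Finset.sum_congr rfl (fun i _ => hcolP i), Finset.sum_const,
              Finset.card_range, nsmul_eq_mul, ← ENNReal.ofReal_natCast L,
              ← ENNReal.ofReal_mul (by positivity)]
    calc P BadE ≤ P (⋃ x ∈ SB, {s : EnvCfg | (s x).1 = false})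
          + (P (⋃ j ∈ Finset.range L, Crow j) + P (⋃ i ∈ Finset.range L, Ccol i)) := by
            rw [hBadE]
            exact le_trans (measure_union_le _ _) (add_le_add_right (measure_union_le _ _) _)
      _ ≤ ENNReal.ofReal ((L:ℝ)*(L:ℝ)*π)
          + (ENNReal.ofReal ((L:ℝ)*((1-q)^L)) + ENNReal.ofReal ((L:ℝ)*((1-q)^L))) :=
            add_le_add s1 (add_le_add s2 s3)
      _ = ENNReal.ofReal ((L:ℝ)*(L:ℝ)*π + 2*(L:ℝ)*((1-q)^L)) := by
            rw [← ENNReal.ofReal_add (by positivity) (by positivity),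
              ← ENNReal.ofReal_add (by positivity) (by positivity)]
            congr 1
            ring
  -- real-number estimate
  have hreal : (L:ℝ)*(L:ℝ)*π + 2*(L:ℝ)*((1-q)^L) ≤ 2 * q ^ (ε/3) := by
    set a : ℝ := q ^ (-(1 + ε / 3)) with ha
    have hapos : 0 < a := Real.rpow_pos_of_pos hq _
    have hLle : (L : ℝ) ≤ a := Nat.floor_le hapos.le
    have hpart1 : (L:ℝ)*(L:ℝ)*π ≤ q ^ (ε/3) := by
      have h1 : (L:ℝ)*(L:ℝ) ≤ a*a :=
        mul_le_mul hLle hLle (Nat.cast_nonneg L) hapos.le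
      have h2 : (L:ℝ)*(L:ℝ)*π ≤ a*a*(q ^ (2+ε)) :=
        mul_le_mul h1 hπlt.le hπ.le (by positivity)
      have h3 : a*a*(q ^ (2+ε)) = q ^ (ε/3) := by
        rw [ha, ← Real.rpow_add hq, ← Real.rpow_add hq]
        congr 1
        ring
      linarith
    have hpart2 : 2*(L:ℝ)*((1-q)^L) ≤ q ^ (ε/3) := hnum q hq hqlt
    linarith
  have hBadReal : (P BadE).toReal ≤ 2 * q ^ (ε/3) := by
    have h4 := ENNReal.toReal_mono ENNReal.ofReal_ne_top hb1
    rw [ENNReal.toReal_ofReal (by positivity)] at h4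
    linarith
  -- conclusion
  have hsub2 : P BadEᶜ ≤ P {s : EnvCfg | GoodBox L s (0,0)} := measure_mono hsubset
  have h5 : (P BadEᶜ).toReal ≤ (P {s : EnvCfg | GoodBox L s (0,0)}).toReal :=
    ENNReal.toReal_mono (measure_ne_top _ _) hsub2
  have h6 : (P BadEᶜ).toReal = 1 - (P BadE).toReal := by
    rw [prob_compl_eq_one_sub mBad,
      ENNReal.toReal_sub_of_le prob_le_one ENNReal.one_ne_top, ENNReal.toReal_one]
  linarith
end

section
/- For every ε > 0 there exists q₀ > 0 such that for all 0 < q < q₀ and all 0 < π < q^{2+ε}, setting L = ⌊q^{−1−ε/3}⌋, the ν⊗μ-probability that the box containing the origin belongs to an infinite connected cluster of good boxes (where boxes at coarse-grained sites x̂, ŷ are adjacent when x̂ and ŷ are nearest neighbours in ℤ²) is at least 1 − 16q^{ε/3}. -/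
open MeasureTheory ProbabilityTheory

/-- Nearest-neighbour adjacency in ℤ². -/
def SiteAdj (a b : Site) : Prop :=
  (a.1 = b.1 ∧ (a.2 = b.2 + 1 ∨ a.2 + 1 = b.2)) ∨
  (a.2 = b.2 ∧ (a.1 = b.1 + 1 ∨ a.1 + 1 = b.1))

/-- `a` and `b` are connected within the set `C` by a nearest-neighbour path. -/
def ConnIn (C : Set Site) (a b : Site) : Prop :=
  ∃ n : ℕ, ∃ p : ℕ → Site, p 0 = a ∧ p n = b ∧ (∀ i ≤ n, p i ∈ C) ∧
    ∀ i < n, SiteAdj (p i) (p (i + 1))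

/-- The box containing the origin belongs to an infinite connected cluster of good boxes. -/
def OriginInInfiniteGoodCluster (L : ℕ) (s : EnvCfg) : Prop :=
  ∃ C : Set Site, ((0, 0) : Site) ∈ C ∧ C.Infinite ∧ (∀ v ∈ C, GoodBox L s v) ∧
    ∀ a ∈ C, ∀ b ∈ C, ConnIn C a b

open scoped ENNReal

/-! ### ConnIn API -/

lemma SiteAdj.symm {a b : Site} (h : SiteAdj a b) : SiteAdj b a := by
  unfold SiteAdj at *; tauto

lemma connIn_refl {C : Set Site} {a : Site} (ha : a ∈ C) : ConnIn C a a :=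
  ⟨0, fun _ => a, rfl, rfl, fun _ _ => ha, fun i hi => absurd hi (Nat.not_lt_zero i)⟩

lemma ConnIn.mono {C D : Set Site} (h : C ⊆ D) {a b : Site} :
    ConnIn C a b → ConnIn D a b := by
  rintro ⟨n, p, h0, h1, hm, ha⟩
  exact ⟨n, p, h0, h1, fun i hi => h (hm i hi), ha⟩

lemma ConnIn.mem_left {C : Set Site} {a b : Site} (h : ConnIn C a b) : a ∈ C := by
  obtain ⟨n, p, h0, h1, hm, _⟩ := h
  simpa [h0] using hm 0 (Nat.zero_le n)

lemma ConnIn.mem_right {C : Set Site} {a b : Site} (h : ConnIn C a b) : b ∈ C := by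
  obtain ⟨n, p, h0, h1, hm, _⟩ := h
  simpa [h1] using hm n le_rfl

lemma ConnIn.trans {C : Set Site} {a b c : Site} (h1 : ConnIn C a b) (h2 : ConnIn C b c) :
    ConnIn C a c := by
  obtain ⟨n, p, p0, pn, pm, pa⟩ := h1
  obtain ⟨m, r, r0, rm, rmem, ra⟩ := h2
  refine ⟨n + m, fun i => if i ≤ n then p i else r (i - n), by simp [p0], ?_, ?_, ?_⟩
  · rcases Nat.eq_zero_or_pos m with hm0 | hm0
    · subst hm0
      simp only [Nat.add_zero, le_refl, if_pos, pn]
      rw [← r0, rm]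
    · show (if n + m ≤ n then p (n + m) else r (n + m - n)) = c
      rw [if_neg (by omega), show n + m - n = m from by omega, rm]
  · intro i hi
    by_cases h : i ≤ n
    · simpa [h] using pm i h
    · simp only [if_neg h]
      exact rmem (i - n) (by omega)
  · intro i hi
    rcases lt_trichotomy i n with h | h | h
    · simpa [Nat.le_of_lt h, Nat.succ_le_of_lt h] using pa i h
    · subst h
      simp only [le_refl, if_pos, if_neg (by omega : ¬ i + 1 ≤ i)]
      rw [show i + 1 - i = 1 from by omega, pn, ← r0]
      exact ra 0 (by omega)
    · simp only [if_neg (by omega : ¬ i ≤ n), if_neg (by omega : ¬ i + 1 ≤ n)]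
      rw [show i + 1 - n = (i - n) + 1 from by omega]
      exact ra (i - n) (by omega)

lemma ConnIn.symm {C : Set Site} {a b : Site} (h : ConnIn C a b) : ConnIn C b a := by
  obtain ⟨n, p, p0, pn, pm, pa⟩ := h
  refine ⟨n, fun i => p (n - i), by simp [pn], by simp [p0], fun i hi => pm _ (by omega), ?_⟩
  intro i hi
  have := pa (n - i - 1) (by omega)
  rw [show n - i - 1 + 1 = n - i from by omega] at this
  show SiteAdj (p (n - i)) (p (n - (i + 1)))
  rw [show n - (i + 1) = n - i - 1 from by omega]
  exact this.symm

lemma ConnIn.single {C : Set Site} {a b : Site} (ha : a ∈ C) (hb : b ∈ C) (h : SiteAdj a b) :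
    ConnIn C a b := by
  refine ⟨1, fun i => if i = 0 then a else b, by simp, by simp, ?_, ?_⟩
  · intro i hi
    by_cases h0 : i = 0 <;> simp [h0, ha, hb]
  · intro i hi
    have : i = 0 := by omega
    simpa [this] using h

/-! ### Srv : hierarchical 2-of-3 service sets -/

def Srv : ℕ → ℤ → Set ℤ → Prop
  | 0, a, S => a ∈ S
  | m+1, a, S => ∃ i j : Fin 3, i ≠ j ∧ Srv m (a + i * 3^m) S ∧ Srv m (a + j * 3^m) S

lemma Srv.mono : ∀ {m : ℕ} {a : ℤ} {S T : Set ℤ}, S ⊆ T → Srv m a S → Srv m a T := by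
  intro m
  induction m with
  | zero => intro a S T h hs; exact h hs
  | succ m ih =>
    rintro a S T h ⟨i, j, hij, h1, h2⟩
    exact ⟨i, j, hij, ih h h1, ih h h2⟩

private lemma fin3_common : ∀ i j k l : Fin 3, i ≠ j → k ≠ l →
    i = k ∨ i = l ∨ j = k ∨ j = l := by decide

lemma Srv.inter : ∀ {m : ℕ} {a : ℤ} {S T : Set ℤ},
    Srv m a S → Srv m a T → ∃ x, x ∈ S ∧ x ∈ T := by
  intro m
  induction m with
  | zero => intro a S T hs ht; exact ⟨a, hs, ht⟩
  | succ m ih =>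
    rintro a S T ⟨i, j, hij, hS1, hS2⟩ ⟨k, l, hkl, hT1, hT2⟩
    rcases fin3_common i j k l hij hkl with h | h | h | h
    · exact ih hS1 (h ▸ hT1)
    · exact ih hS1 (h ▸ hT2)
    · exact ih hS2 (h ▸ hT1)
    · exact ih hS2 (h ▸ hT2)

lemma Srv.nonempty : ∀ {m : ℕ} {a : ℤ} {S : Set ℤ}, Srv m a S → ∃ x, x ∈ S := by
  intro m a S h
  obtain ⟨x, hx, _⟩ := h.inter h
  exact ⟨x, hx⟩

/-! ### cell connectivity in a 3×3 block with at most one bad cell -/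

abbrev Cell := Fin 3 × Fin 3

def CAdj (a b : Cell) : Prop :=
  (a.1 = b.1 ∧ ((b.2 : ℕ) = (a.2 : ℕ) + 1 ∨ (a.2 : ℕ) = (b.2 : ℕ) + 1)) ∨
  (a.2 = b.2 ∧ ((b.1 : ℕ) = (a.1 : ℕ) + 1 ∨ (a.1 : ℕ) = (b.1 : ℕ) + 1))

instance : ∀ a b : Cell, Decidable (CAdj a b) := fun a b => by unfold CAdj; infer_instance

def CellRel (good : Cell → Prop) (c d : Cell) : Prop := good c ∧ good d ∧ CAdj c d

lemma cellRel_symm {good : Cell → Prop} : Symmetric (CellRel good) := by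
  rintro c d ⟨h1, h2, h3⟩
  refine ⟨h2, h1, ?_⟩
  unfold CAdj at *; tauto

lemma cellConn (good : Cell → Prop) (H : ∀ a b : Cell, ¬ good a → ¬ good b → a = b) :
    ∀ a b : Cell, good a → good b → Relation.ReflTransGen (CellRel good) a b := by
  have symmRTG : ∀ a b : Cell, Relation.ReflTransGen (CellRel good) a b →
      Relation.ReflTransGen (CellRel good) b a :=
    fun a b h => by
      haveI : Std.Symm (CellRel good) := ⟨fun a b h => cellRel_symm h⟩
      exact Relation.ReflTransGen.symmetric.symm a b h
  by_cases hc : good (1, 1)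
  · -- connect everything to the center
    have key : ∀ a : Cell, good a → Relation.ReflTransGen (CellRel good) a (1, 1) := by
      intro a ha
      have corner : ∀ p q r : Cell, good p → CAdj p q → CAdj p r → CAdj q (1,1) → CAdj r (1,1) →
          q ≠ r → Relation.ReflTransGen (CellRel good) p (1, 1) := by
        intro p q r hp hpq hpr hq1 hr1 hqr
        by_cases hgq : good q
        · exact (Relation.ReflTransGen.single ⟨hp, hgq, hpq⟩).tail ⟨hgq, hc, hq1⟩
        · have hgr : good r := Classical.byContradiction fun hgr => hqr (H q r hgq hgr)
          exact (Relation.ReflTransGen.single ⟨hp, hgr, hpr⟩).tail ⟨hgr, hc, hr1⟩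
      fin_cases a
      · exact corner _ (0,1) (1,0) ha (by decide) (by decide) (by decide) (by decide) (by decide)
      · exact Relation.ReflTransGen.single ⟨ha, hc, by decide⟩
      · exact corner _ (0,1) (1,2) ha (by decide) (by decide) (by decide) (by decide) (by decide)
      · exact Relation.ReflTransGen.single ⟨ha, hc, by decide⟩
      · exact Relation.ReflTransGen.refl
      · exact Relation.ReflTransGen.single ⟨ha, hc, by decide⟩
      · exact corner _ (2,1) (1,0) ha (by decide) (by decide) (by decide) (by decide) (by decide)
      · exact Relation.ReflTransGen.single ⟨ha, hc, by decide⟩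
      · exact corner _ (2,1) (1,2) ha (by decide) (by decide) (by decide) (by decide) (by decide)
    intro a b ha hb
    exact (key a ha).trans (symmRTG _ _ (key b hb))
  · -- center is the unique bad cell; go around the ring
    have hg : ∀ c : Cell, c ≠ (1, 1) → good c := by
      intro c hne
      by_contra hgc
      exact hne (H c (1,1) hgc hc)
    have step : ∀ c d : Cell, c ≠ (1,1) → d ≠ (1,1) → CAdj c d → CellRel good c d :=
      fun c d h1 h2 h3 => ⟨hg c h1, hg d h2, h3⟩
    have ring : ∀ a : Cell, a ≠ (1,1) → Relation.ReflTransGen (CellRel good) (0, 0) a := by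
      intro a ha
      have s1 : Relation.ReflTransGen (CellRel good) (0,0) (1,0) :=
        Relation.ReflTransGen.single (step _ _ (by decide) (by decide) (by decide))
      have s2 := s1.tail (step (1,0) (2,0) (by decide) (by decide) (by decide))
      have s3 := s2.tail (step (2,0) (2,1) (by decide) (by decide) (by decide))
      have s4 := s3.tail (step (2,1) (2,2) (by decide) (by decide) (by decide))
      have s5 := s4.tail (step (2,2) (1,2) (by decide) (by decide) (by decide))
      have s6 := s5.tail (step (1,2) (0,2) (by decide) (by decide) (by decide))
      have s7 := s6.tail (step (0,2) (0,1) (by decide) (by decide) (by decide))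
      fin_cases a
      · exact Relation.ReflTransGen.refl
      · exact s7
      · exact s6
      · exact s1
      · exact absurd rfl ha
      · exact s5
      · exact s2
      · exact s3
      · exact s4
    intro a b ha hb
    have ha' : a ≠ (1,1) := fun h => hc (h ▸ ha)
    have hb' : b ≠ (1,1) := fun h => hc (h ▸ hb)
    exact (symmRTG _ _ (ring a ha')).trans (ring b hb')
/-! ### hierarchical good blocks -/

def child (v : Site) (a : Cell) : Site := (3 * v.1 + (a.1 : ℤ), 3 * v.2 + (a.2 : ℤ))

def GoodH (G : Site → Prop) : ℕ → Site → Prop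
  | 0, v => G v
  | m+1, v => ∀ a b : Cell, ¬ GoodH G m (child v a) → ¬ GoodH G m (child v b) → a = b

def AG (G : Site → Prop) : ℕ → Site → Prop
  | 0, v => G v
  | m+1, v => GoodH G (m+1) v ∧ AG G m (child v (0, 0))

lemma AG.goodH {G : Site → Prop} : ∀ {m : ℕ} {v : Site}, AG G m v → GoodH G m v
  | 0, _, h => h
  | _+1, _, h => h.1

lemma two_of_three {f : Fin 3 → Prop} (H : ∀ i j : Fin 3, ¬ f i → ¬ f j → i = j) :
    ∃ i j : Fin 3, i ≠ j ∧ f i ∧ f j := by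
  by_cases h0 : f 0
  · by_cases h1 : f 1
    · exact ⟨0, 1, by decide, h0, h1⟩
    · have h2 : f 2 := Classical.byContradiction fun h2 =>
        absurd (H 1 2 h1 h2) (by decide)
      exact ⟨0, 2, by decide, h0, h2⟩
  · have h1 : f 1 := Classical.byContradiction fun h1 => absurd (H 0 1 h0 h1) (by decide)
    have h2 : f 2 := Classical.byContradiction fun h2 => absurd (H 0 2 h0 h2) (by decide)
    exact ⟨1, 2, by decide, h1, h2⟩

lemma invariantH (G : Site → Prop) : ∀ (m : ℕ) (v : Site), GoodH G m v →
    ∃ N : Set Site,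
      (∀ w ∈ N, G w) ∧
      (∀ a ∈ N, ∀ b ∈ N, ConnIn N a b) ∧
      Srv m (3^m * v.1) {x | (x, 3^m * v.2 + 3^m - 1) ∈ N} ∧
      Srv m (3^m * v.1) {x | (x, 3^m * v.2) ∈ N} ∧
      Srv m (3^m * v.2) {y | (3^m * v.1 + 3^m - 1, y) ∈ N} ∧
      Srv m (3^m * v.2) {y | (3^m * v.1, y) ∈ N} ∧
      (AG G m v → ((3:ℤ)^m * v.1, (3:ℤ)^m * v.2) ∈ N) := by
  intro m
  induction m with
  | zero =>
    intro v hv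
    refine ⟨{v}, ?_, ?_, ?_, ?_, ?_, ?_, ?_⟩
    · rintro w rfl; exact hv
    · rintro a rfl b rfl; exact connIn_refl rfl
    · show ((3:ℤ)^0 * v.1, (3:ℤ)^0 * v.2 + 3^0 - 1) ∈ ({v} : Set Site)
      simp
    · show ((3:ℤ)^0 * v.1, (3:ℤ)^0 * v.2) ∈ ({v} : Set Site)
      simp
    · show ((3:ℤ)^0 * v.1 + 3^0 - 1, (3:ℤ)^0 * v.2) ∈ ({v} : Set Site)
      simp
    · show ((3:ℤ)^0 * v.1, (3:ℤ)^0 * v.2) ∈ ({v} : Set Site)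
      simp
    · intro _
      simp
  | succ m ih =>
    intro v hv
    classical
    have hv' : ∀ a b : Cell, ¬ GoodH G m (child v a) → ¬ GoodH G m (child v b) → a = b := hv
    choose N hG hConn hTop hBot hRight hLeft hCorner using
      fun (a : Cell) (h : GoodH G m (child v a)) => ih (child v a) h
    set cg : Cell → Prop := fun a => GoodH G m (child v a) with hcg
    set U : Set Site := ⋃ (a : Cell), ⋃ (h : cg a), N a h with hU
    have hsub : ∀ a (h : cg a), N a h ⊆ U := by
      intro a h w hw
      exact Set.mem_iUnion.2 ⟨a, Set.mem_iUnion.2 ⟨h, hw⟩⟩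
    have c1 : ∀ a : Cell, (child v a).1 = 3 * v.1 + (a.1 : ℤ) := fun a => rfl
    have c2 : ∀ a : Cell, (child v a).2 = 3 * v.2 + (a.2 : ℤ) := fun a => rfl
    -- linking of adjacent good children
    have link : ∀ a b (ha : cg a) (hb : cg b), CAdj a b →
        ∃ w₁ ∈ N a ha, ∃ w₂ ∈ N b hb, SiteAdj w₁ w₂ := by
      intro a b ha hb hadj
      rcases hadj with ⟨h1, h2 | h2⟩ | ⟨h1, h2 | h2⟩
      · -- b above a
        have hb2 : ((b.2 : ℤ)) = (a.2 : ℤ) + 1 := by exact_mod_cast congrArg (Nat.cast : ℕ → ℤ) h2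
        have hoff : (3:ℤ)^m * (child v b).1 = 3^m * (child v a).1 := by rw [c1, c1, h1]
        obtain ⟨x, hxa, hxb⟩ := (hTop a ha).inter (hoff ▸ hBot b hb)
        refine ⟨_, hxa, _, hxb, Or.inl ⟨rfl, Or.inr ?_⟩⟩
        show 3^m * (child v a).2 + 3^m - 1 + 1 = 3^m * (child v b).2
        rw [c2, c2, hb2]; ring
      · -- a above b
        have ha2 : ((a.2 : ℤ)) = (b.2 : ℤ) + 1 := by exact_mod_cast congrArg (Nat.cast : ℕ → ℤ) h2
        have hoff : (3:ℤ)^m * (child v b).1 = 3^m * (child v a).1 := by rw [c1, c1, h1]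
        obtain ⟨x, hxa, hxb⟩ := (hBot a ha).inter (hoff ▸ hTop b hb)
        refine ⟨_, hxa, _, hxb, Or.inl ⟨rfl, Or.inl ?_⟩⟩
        show 3^m * (child v a).2 = 3^m * (child v b).2 + 3^m - 1 + 1
        rw [c2, c2, ha2]; ring
      · -- b right of a
        have hb1 : ((b.1 : ℤ)) = (a.1 : ℤ) + 1 := by exact_mod_cast congrArg (Nat.cast : ℕ → ℤ) h2
        have hoff : (3:ℤ)^m * (child v b).2 = 3^m * (child v a).2 := by rw [c2, c2, h1]
        obtain ⟨y, hya, hyb⟩ := (hRight a ha).inter (hoff ▸ hLeft b hb)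
        refine ⟨_, hya, _, hyb, Or.inr ⟨rfl, Or.inr ?_⟩⟩
        show 3^m * (child v a).1 + 3^m - 1 + 1 = 3^m * (child v b).1
        rw [c1, c1, hb1]; ring
      · -- a right of b
        have ha1 : ((a.1 : ℤ)) = (b.1 : ℤ) + 1 := by exact_mod_cast congrArg (Nat.cast : ℕ → ℤ) h2
        have hoff : (3:ℤ)^m * (child v b).2 = 3^m * (child v a).2 := by rw [c2, c2, h1]
        obtain ⟨y, hya, hyb⟩ := (hLeft a ha).inter (hoff ▸ hRight b hb)
        refine ⟨_, hya, _, hyb, Or.inr ⟨rfl, Or.inl ?_⟩⟩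
        show 3^m * (child v a).1 = 3^m * (child v b).1 + 3^m - 1 + 1
        rw [c1, c1, ha1]; ring
    have connU' : ∀ a (ha : cg a), ∀ x ∈ N a ha, ∀ b, Relation.ReflTransGen (CellRel cg) a b →
        ∀ (hb : cg b), ∀ y ∈ N b hb, ConnIn U x y := by
      intro a ha x hx b hchain
      induction hchain with
      | refl => intro hb y hy; exact (hConn a ha x hx y hy).mono (hsub a ha)
      | @tail c d hac hcd ihc =>
        intro hd y hy
        obtain ⟨hc, hd', hadj⟩ := hcd
        obtain ⟨w₁, hw₁, w₂, hw₂, hw⟩ := link c d hc hd hadj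
        exact (((ihc hc w₁ hw₁).trans
          (ConnIn.single (hsub c hc hw₁) (hsub d hd hw₂) hw)).trans
          ((hConn d hd w₂ hw₂ y hy).mono (hsub d hd)))
    have connU : ∀ x ∈ U, ∀ y ∈ U, ConnIn U x y := by
      intro x hx y hy
      obtain ⟨a, ha, hxa⟩ := by
        simpa only [hU, Set.mem_iUnion] using hx
      obtain ⟨b, hb, hyb⟩ := by
        simpa only [hU, Set.mem_iUnion] using hy
      exact connU' a ha x hxa b (cellConn cg hv' a b ha hb) hb y hyb
    refine ⟨U, ?_, connU, ?_, ?_, ?_, ?_, ?_⟩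
    · intro w hw
      obtain ⟨a, ha, hwa⟩ := by simpa only [hU, Set.mem_iUnion] using hw
      exact hG a ha w hwa
    · -- top
      obtain ⟨i₁, i₂, hne, hg1, hg2⟩ := two_of_three (f := fun i => cg (i, 2))
        (fun i j hi hj => by
          have := hv' (i, 2) (j, 2) hi hj
          exact (Prod.mk.injEq _ _ _ _ ▸ this).1)
      refine ⟨i₁, i₂, hne, ?_, ?_⟩
      · have h' := hTop (i₁, 2) hg1
        rw [show (3:ℤ)^m * (child v (i₁, 2)).1 = 3^(m+1) * v.1 + (i₁:ℤ) * 3^m from by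
          rw [c1]; push_cast; ring] at h'
        refine h'.mono ?_
        intro x hx
        show (x, (3:ℤ)^(m+1) * v.2 + 3^(m+1) - 1) ∈ U
        have : (3:ℤ)^(m+1) * v.2 + 3^(m+1) - 1 = 3^m * (child v (i₁, 2)).2 + 3^m - 1 := by
          rw [c2]; show _ = (3:ℤ)^m * (3 * v.2 + ((2:ℕ):ℤ)) + 3^m - 1; push_cast; ring
        rw [this]
        exact hsub _ hg1 hx
      · have h' := hTop (i₂, 2) hg2
        rw [show (3:ℤ)^m * (child v (i₂, 2)).1 = 3^(m+1) * v.1 + (i₂:ℤ) * 3^m from by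
          rw [c1]; push_cast; ring] at h'
        refine h'.mono ?_
        intro x hx
        show (x, (3:ℤ)^(m+1) * v.2 + 3^(m+1) - 1) ∈ U
        have : (3:ℤ)^(m+1) * v.2 + 3^(m+1) - 1 = 3^m * (child v (i₂, 2)).2 + 3^m - 1 := by
          rw [c2]; show _ = (3:ℤ)^m * (3 * v.2 + ((2:ℕ):ℤ)) + 3^m - 1; push_cast; ring
        rw [this]
        exact hsub _ hg2 hx
    · -- bottom
      obtain ⟨i₁, i₂, hne, hg1, hg2⟩ := two_of_three (f := fun i => cg (i, 0))
        (fun i j hi hj => by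
          have := hv' (i, 0) (j, 0) hi hj
          exact (Prod.mk.injEq _ _ _ _ ▸ this).1)
      refine ⟨i₁, i₂, hne, ?_, ?_⟩
      · have h' := hBot (i₁, 0) hg1
        rw [show (3:ℤ)^m * (child v (i₁, 0)).1 = 3^(m+1) * v.1 + (i₁:ℤ) * 3^m from by
          rw [c1]; push_cast; ring] at h'
        refine h'.mono ?_
        intro x hx
        show (x, (3:ℤ)^(m+1) * v.2) ∈ U
        have : (3:ℤ)^(m+1) * v.2 = 3^m * (child v (i₁, 0)).2 := by
          rw [c2]; show _ = (3:ℤ)^m * (3 * v.2 + ((0:ℕ):ℤ)); push_cast; ring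
        rw [this]
        exact hsub _ hg1 hx
      · have h' := hBot (i₂, 0) hg2
        rw [show (3:ℤ)^m * (child v (i₂, 0)).1 = 3^(m+1) * v.1 + (i₂:ℤ) * 3^m from by
          rw [c1]; push_cast; ring] at h'
        refine h'.mono ?_
        intro x hx
        show (x, (3:ℤ)^(m+1) * v.2) ∈ U
        have : (3:ℤ)^(m+1) * v.2 = 3^m * (child v (i₂, 0)).2 := by
          rw [c2]; show _ = (3:ℤ)^m * (3 * v.2 + ((0:ℕ):ℤ)); push_cast; ring
        rw [this]
        exact hsub _ hg2 hx
    · -- right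
      obtain ⟨j₁, j₂, hne, hg1, hg2⟩ := two_of_three (f := fun j => cg (2, j))
        (fun i j hi hj => by
          have := hv' (2, i) (2, j) hi hj
          exact (Prod.mk.injEq _ _ _ _ ▸ this).2)
      refine ⟨j₁, j₂, hne, ?_, ?_⟩
      · have h' := hRight (2, j₁) hg1
        rw [show (3:ℤ)^m * (child v (2, j₁)).2 = 3^(m+1) * v.2 + (j₁:ℤ) * 3^m from by
          rw [c2]; push_cast; ring] at h'
        refine h'.mono ?_
        intro y hy
        show ((3:ℤ)^(m+1) * v.1 + 3^(m+1) - 1, y) ∈ U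
        have : (3:ℤ)^(m+1) * v.1 + 3^(m+1) - 1 = 3^m * (child v (2, j₁)).1 + 3^m - 1 := by
          rw [c1]; show _ = (3:ℤ)^m * (3 * v.1 + ((2:ℕ):ℤ)) + 3^m - 1; push_cast; ring
        rw [this]
        exact hsub _ hg1 hy
      · have h' := hRight (2, j₂) hg2
        rw [show (3:ℤ)^m * (child v (2, j₂)).2 = 3^(m+1) * v.2 + (j₂:ℤ) * 3^m from by
          rw [c2]; push_cast; ring] at h'
        refine h'.mono ?_
        intro y hy
        show ((3:ℤ)^(m+1) * v.1 + 3^(m+1) - 1, y) ∈ U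
        have : (3:ℤ)^(m+1) * v.1 + 3^(m+1) - 1 = 3^m * (child v (2, j₂)).1 + 3^m - 1 := by
          rw [c1]; show _ = (3:ℤ)^m * (3 * v.1 + ((2:ℕ):ℤ)) + 3^m - 1; push_cast; ring
        rw [this]
        exact hsub _ hg2 hy
    · -- left
      obtain ⟨j₁, j₂, hne, hg1, hg2⟩ := two_of_three (f := fun j => cg (0, j))
        (fun i j hi hj => by
          have := hv' (0, i) (0, j) hi hj
          exact (Prod.mk.injEq _ _ _ _ ▸ this).2)
      refine ⟨j₁, j₂, hne, ?_, ?_⟩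
      · have h' := hLeft (0, j₁) hg1
        rw [show (3:ℤ)^m * (child v (0, j₁)).2 = 3^(m+1) * v.2 + (j₁:ℤ) * 3^m from by
          rw [c2]; push_cast; ring] at h'
        refine h'.mono ?_
        intro y hy
        show ((3:ℤ)^(m+1) * v.1, y) ∈ U
        have : (3:ℤ)^(m+1) * v.1 = 3^m * (child v (0, j₁)).1 := by
          rw [c1]; show _ = (3:ℤ)^m * (3 * v.1 + ((0:ℕ):ℤ)); push_cast; ring
        rw [this]
        exact hsub _ hg1 hy
      · have h' := hLeft (0, j₂) hg2
        rw [show (3:ℤ)^m * (child v (0, j₂)).2 = 3^(m+1) * v.2 + (j₂:ℤ) * 3^m from by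
          rw [c2]; push_cast; ring] at h'
        refine h'.mono ?_
        intro y hy
        show ((3:ℤ)^(m+1) * v.1, y) ∈ U
        have : (3:ℤ)^(m+1) * v.1 = 3^m * (child v (0, j₂)).1 := by
          rw [c1]; show _ = (3:ℤ)^m * (3 * v.1 + ((0:ℕ):ℤ)); push_cast; ring
        rw [this]
        exact hsub _ hg2 hy
    · -- corner
      intro hAG
      obtain ⟨hGH, hAGc⟩ := hAG
      have h00 : cg (0, 0) := hAGc.goodH
      have hmem := hCorner (0, 0) h00 hAGc
      have e1 : (3:ℤ)^(m+1) * v.1 = 3^m * (child v (0, 0)).1 := by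
        rw [c1]; show _ = (3:ℤ)^m * (3 * v.1 + ((0:ℕ):ℤ)); push_cast; ring
      have e2 : (3:ℤ)^(m+1) * v.2 = 3^m * (child v (0, 0)).2 := by
        rw [c2]; show _ = (3:ℤ)^m * (3 * v.2 + ((0:ℕ):ℤ)); push_cast; ring
      rw [e1, e2]
      exact hsub _ h00 hmem

/-! ### assembling the infinite cluster -/

lemma child_zero : child (0, 0) (0, 0) = ((0 : ℤ), (0 : ℤ)) := by
  simp [child]

lemma AG_zero (G : Site → Prop) (hAll : ∀ m : ℕ, GoodH G m (0, 0)) :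
    ∀ m : ℕ, AG G m ((0 : ℤ), (0 : ℤ)) := by
  intro m
  induction m with
  | zero => exact hAll 0
  | succ m ihm => exact ⟨hAll (m + 1), child_zero ▸ ihm⟩

lemma origin_cluster (G : Site → Prop) (hAll : ∀ m : ℕ, GoodH G m (0, 0)) :
    ∃ C : Set Site, ((0, 0) : Site) ∈ C ∧ C.Infinite ∧ (∀ v ∈ C, G v) ∧
      ∀ a ∈ C, ∀ b ∈ C, ConnIn C a b := by
  classical
  set Gs : Set Site := {v | G v} with hGs
  set C : Set Site := {v | ConnIn Gs (0, 0) v} with hC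
  have hO : ((0, 0) : Site) ∈ Gs := hAll 0
  have hOC : ((0, 0) : Site) ∈ C := connIn_refl hO
  have lift : ∀ v, ConnIn Gs (0, 0) v → ConnIn C (0, 0) v := by
    rintro v ⟨n, p, p0, pn, pm, pa⟩
    refine ⟨n, p, p0, pn, ?_, pa⟩
    intro i hi
    exact ⟨i, p, p0, rfl, fun j hj => pm j (le_trans hj hi),
      fun j hj => pa j (lt_of_lt_of_le hj hi)⟩
  -- witnesses far away
  have far : ∀ m : ℕ, ∃ w : Site, w ∈ C ∧ w.2 = 3^m - 1 := by
    intro m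
    obtain ⟨N, hNG, hNconn, hNtop, -, -, -, hNcorner⟩ := invariantH G m (0, 0) (hAll m)
    obtain ⟨x, hx⟩ := hNtop.nonempty
    have hcorner := hNcorner (AG_zero G hAll m)
    have hzero : ((3:ℤ)^m * (0 : ℤ), (3:ℤ)^m * (0 : ℤ)) = ((0 : ℤ), (0 : ℤ)) := by norm_num
    rw [hzero] at hcorner
    have hconn : ConnIn Gs (0, 0) (x, (3:ℤ)^m * (0 : ℤ) + 3^m - 1) :=
      (hNconn _ hcorner _ hx).mono (fun w hw => hNG w hw)
    exact ⟨_, hconn, by norm_num⟩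
  choose f hfC hf2 using far
  have hinj : Function.Injective f := by
    intro m₁ m₂ h
    have h2 : (3:ℤ)^m₁ - 1 = 3^m₂ - 1 := by rw [← hf2 m₁, ← hf2 m₂, h]
    have h3 : (3:ℤ)^m₁ = 3^m₂ := by linarith
    have : StrictMono (fun m : ℕ => (3:ℤ)^m) := fun a b hab =>
      pow_lt_pow_right₀ (by norm_num) hab
    exact this.injective h3
  refine ⟨C, hOC, Set.infinite_of_injective_forall_mem hinj hfC, ?_, ?_⟩
  · intro v hv
    exact (hv : ConnIn Gs (0, 0) v).mem_right
  · intro a ha b hb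
    exact ((lift a ha).symm).trans (lift b hb)

lemma origin_in_cluster_of_goodH (L : ℕ) (s : EnvCfg)
    (hAll : ∀ m : ℕ, GoodH (fun v => GoodBox L s v) m (0, 0)) :
    OriginInInfiniteGoodCluster L s :=
  origin_cluster (fun v => GoodBox L s v) hAll

/-! ### coordinates and σ-algebras -/

abbrev coordF : Site ⊕ Site → EnvCfg → Bool :=
  fun i s => Sum.elim (fun x => (s x).1) (fun x => (s x).2) i

lemma coordF_measurable (i : Site ⊕ Site) : Measurable (coordF i) := by
  cases i with
  | inl x => exact measurable_fst.comp (measurable_pi_apply x)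
  | inr x => exact measurable_snd.comp (measurable_pi_apply x)

def coordMS (S : Set (Site ⊕ Site)) : MeasurableSpace EnvCfg :=
  ⨆ i ∈ S, MeasurableSpace.comap (coordF i) inferInstance

lemma ms_le_apply {m₁ m₂ : MeasurableSpace EnvCfg} (h : m₁ ≤ m₂) {A : Set EnvCfg}
    (hA : MeasurableSet[m₁] A) : MeasurableSet[m₂] A := h _ hA

lemma coordMS_le (S : Set (Site ⊕ Site)) :
    coordMS S ≤ (inferInstance : MeasurableSpace EnvCfg) := by
  apply iSup₂_le
  intro i _
  exact (coordF_measurable i).comap_le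

lemma coordMS_mono {S T : Set (Site ⊕ Site)} (h : S ⊆ T) : coordMS S ≤ coordMS T :=
  biSup_mono h

lemma measurableSet_coord {S : Set (Site ⊕ Site)} {i : Site ⊕ Site} (hi : i ∈ S) (b : Bool) :
    MeasurableSet[coordMS S] {s : EnvCfg | coordF i s = b} := by
  have h1 : MeasurableSet[MeasurableSpace.comap (coordF i) inferInstance]
      {s : EnvCfg | coordF i s = b} := ⟨{b}, trivial, rfl⟩
  exact ms_le_apply (le_iSup₂_of_le i hi le_rfl) h1

lemma measurableSet_cyl1 {S : Set (Site ⊕ Site)} {x : Site} (hx : Sum.inl x ∈ S) (b : Bool) :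
    MeasurableSet[coordMS S] {s : EnvCfg | (s x).1 = b} :=
  measurableSet_coord hx b

lemma measurableSet_cyl2 {S : Set (Site ⊕ Site)} {x : Site} (hx : Sum.inr x ∈ S) (b : Bool) :
    MeasurableSet[coordMS S] {s : EnvCfg | (s x).2 = b} :=
  measurableSet_coord hx b

/-! ### supports -/

def FS (L : ℕ) : ℕ → Site → Set Site
  | 0, v => box L v
  | m+1, v => ⋃ a : Cell, FS L m (child v a)

def SuppI (L : ℕ) (m : ℕ) (v : Site) : Set (Site ⊕ Site) :=
  Sum.inl '' FS L m v ∪ Sum.inr '' FS L m v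

lemma mem_suppI_inl {L m v} {x : Site} : Sum.inl x ∈ SuppI L m v ↔ x ∈ FS L m v := by
  simp [SuppI]

lemma mem_suppI_inr {L m v} {x : Site} : Sum.inr x ∈ SuppI L m v ↔ x ∈ FS L m v := by
  simp [SuppI]

lemma site_mem_box {L : ℕ} {v : Site} {i j : ℕ} (hi : i < L) (hj : j < L) :
    ((L : ℤ) * v.1 + i, (L : ℤ) * v.2 + j) ∈ box L v := by
  have hi' : (i : ℤ) < (L : ℤ) := by exact_mod_cast hi
  have hj' : (j : ℤ) < (L : ℤ) := by exact_mod_cast hj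
  have hi0 : (0:ℤ) ≤ (i:ℤ) := Int.natCast_nonneg i
  have hj0 : (0:ℤ) ≤ (j:ℤ) := Int.natCast_nonneg j
  refine ⟨?_, ?_, ?_, ?_⟩
  · show (L:ℤ) * v.1 ≤ (L:ℤ) * v.1 + i
    linarith
  · show (L:ℤ) * v.1 + i < (L:ℤ) * v.1 + L
    linarith
  · show (L:ℤ) * v.2 ≤ (L:ℤ) * v.2 + j
    linarith
  · show (L:ℤ) * v.2 + j < (L:ℤ) * v.2 + L
    linarith

lemma FS_subset_box (L : ℕ) : ∀ (m : ℕ) (v : Site), FS L m v ⊆ box (L * 3^m) v := by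
  intro m
  induction m with
  | zero =>
    intro v
    simpa [FS] using fun y hy => hy
  | succ m ih =>
    intro v w hw
    obtain ⟨a, hwa⟩ := Set.mem_iUnion.1 hw
    have h := ih (child v a) hwa
    obtain ⟨h1, h2, h3, h4⟩ := h
    have hc1 : (child v a).1 = 3 * v.1 + (a.1 : ℤ) := rfl
    have hc2 : (child v a).2 = 3 * v.2 + (a.2 : ℤ) := rfl
    rw [hc1] at h1 h2
    rw [hc2] at h3 h4
    have hn : (0:ℤ) ≤ (L * 3^m : ℕ) := by positivity
    have ha1 : (0:ℤ) ≤ (a.1 : ℤ) ∧ (a.1 : ℤ) ≤ 2 := by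
      constructor
      · positivity
      · exact_mod_cast Nat.lt_succ_iff.1 a.1.isLt
    have ha2 : (0:ℤ) ≤ (a.2 : ℤ) ∧ (a.2 : ℤ) ≤ 2 := by
      constructor
      · positivity
      · exact_mod_cast Nat.lt_succ_iff.1 a.2.isLt
    have hcast : ((L * 3^(m+1) : ℕ) : ℤ) = 3 * ((L * 3^m : ℕ) : ℤ) := by push_cast; ring
    refine ⟨?_, ?_, ?_, ?_⟩ <;> rw [hcast] <;>
      nlinarith [mul_nonneg hn ha1.1, mul_nonneg hn ha2.1,
        mul_le_mul_of_nonneg_left ha1.2 hn, mul_le_mul_of_nonneg_left ha2.2 hn]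

lemma box_disjoint {n : ℕ} (hn : 0 < n) {v v' : Site} (h : v ≠ v') :
    Disjoint (box n v) (box n v') := by
  rw [Set.disjoint_left]
  rintro y ⟨a1, a2, a3, a4⟩ ⟨b1, b2, b3, b4⟩
  apply h
  have hn' : (0:ℤ) < (n:ℤ) := by exact_mod_cast hn
  have e1 : v.1 = v'.1 := by
    have l1 : (n:ℤ) * v.1 < (n:ℤ) * (v'.1 + 1) := by nlinarith
    have l2 : (n:ℤ) * v'.1 < (n:ℤ) * (v.1 + 1) := by nlinarith
    have := lt_of_mul_lt_mul_left l1 (le_of_lt hn')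
    have := lt_of_mul_lt_mul_left l2 (le_of_lt hn')
    omega
  have e2 : v.2 = v'.2 := by
    have l1 : (n:ℤ) * v.2 < (n:ℤ) * (v'.2 + 1) := by nlinarith
    have l2 : (n:ℤ) * v'.2 < (n:ℤ) * (v.2 + 1) := by nlinarith
    have := lt_of_mul_lt_mul_left l1 (le_of_lt hn')
    have := lt_of_mul_lt_mul_left l2 (le_of_lt hn')
    omega
  exact Prod.ext e1 e2

lemma FS_disjoint {L : ℕ} (hL : 0 < L) {m : ℕ} {v v' : Site} (h : v ≠ v') :
    Disjoint (FS L m v) (FS L m v') := by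
  have hb := box_disjoint (n := L * 3^m) (by positivity) h
  exact Set.disjoint_of_subset (FS_subset_box L m v) (FS_subset_box L m v') hb

lemma suppI_disjoint {L : ℕ} (hL : 0 < L) {m : ℕ} {v v' : Site} (h : v ≠ v') :
    Disjoint (SuppI L m v) (SuppI L m v') := by
  have hd := FS_disjoint hL (m := m) h
  rw [Set.disjoint_left] at hd ⊢
  intro i hi hi'
  cases i with
  | inl x => exact hd (mem_suppI_inl.1 hi) (mem_suppI_inl.1 hi')
  | inr x => exact hd (mem_suppI_inr.1 hi) (mem_suppI_inr.1 hi')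

lemma child_injective {v : Site} {a b : Cell} (h : child v a = child v b) : a = b := by
  have h1 := congrArg Prod.fst h
  have h2 := congrArg Prod.snd h
  simp only [child] at h1 h2
  have e1 : (a.1 : ℤ) = (b.1 : ℤ) := by omega
  have e2 : (a.2 : ℤ) = (b.2 : ℤ) := by omega
  have f1 : a.1 = b.1 := by
    have : (a.1 : ℕ) = (b.1 : ℕ) := by exact_mod_cast e1
    exact Fin.ext this
  have f2 : a.2 = b.2 := by
    have : (a.2 : ℕ) = (b.2 : ℕ) := by exact_mod_cast e2
    exact Fin.ext this
  exact Prod.ext f1 f2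

/-! ### measurability of the good-box and hierarchy events -/

lemma goodBox_event_eq (L : ℕ) (v : Site) :
    {s : EnvCfg | GoodBox L s v} =
      (⋂ (y : Site) (_ : y ∈ box L v), {s : EnvCfg | (s y).1 = true}) ∩
      ((⋂ (j : ℕ) (_ : j < L), ⋃ (i : ℕ) (_ : i < L),
        ({s : EnvCfg | (s ((L : ℤ) * v.1 + i, (L : ℤ) * v.2 + j)).1 = true} ∩
         {s : EnvCfg | (s ((L : ℤ) * v.1 + i, (L : ℤ) * v.2 + j)).2 = true})) ∩
       (⋂ (i : ℕ) (_ : i < L), ⋃ (j : ℕ) (_ : j < L),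
        ({s : EnvCfg | (s ((L : ℤ) * v.1 + i, (L : ℤ) * v.2 + j)).1 = true} ∩
         {s : EnvCfg | (s ((L : ℤ) * v.1 + i, (L : ℤ) * v.2 + j)).2 = true}))) := by
  ext s
  simp only [GoodBox, Susc, Infct, Set.mem_inter_iff, Set.mem_iInter, Set.mem_iUnion,
    Set.mem_setOf_eq]
  constructor
  · rintro ⟨h1, h2, h3⟩
    refine ⟨h1, fun j hj => ?_, fun i hi => ?_⟩
    · obtain ⟨i, hi, hI⟩ := h2 j hj
      exact ⟨i, hi, hI.1, hI.2⟩
    · obtain ⟨j, hj, hI⟩ := h3 i hi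
      exact ⟨j, hj, hI.1, hI.2⟩
  · rintro ⟨h1, h2, h3⟩
    refine ⟨h1, fun j hj => ?_, fun i hi => ?_⟩
    · obtain ⟨i, hi, hI1, hI2⟩ := h2 j hj
      exact ⟨i, hi, hI1, hI2⟩
    · obtain ⟨j, hj, hI1, hI2⟩ := h3 i hi
      exact ⟨j, hj, hI1, hI2⟩

lemma measurableSet_goodBox {L : ℕ} {v : Site} {S : Set (Site ⊕ Site)}
    (hS : SuppI L 0 v ⊆ S) : MeasurableSet[coordMS S] {s : EnvCfg | GoodBox L s v} := by
  have hbox : ∀ y ∈ box L v, Sum.inl y ∈ S ∧ Sum.inr y ∈ S := by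
    intro y hy
    exact ⟨hS (mem_suppI_inl.2 hy), hS (mem_suppI_inr.2 hy)⟩
  rw [goodBox_event_eq]
  refine MeasurableSet.inter ?_ (MeasurableSet.inter ?_ ?_)
  · exact MeasurableSet.iInter fun y => MeasurableSet.iInter fun hy =>
      measurableSet_cyl1 (hbox y hy).1 true
  · refine MeasurableSet.iInter fun j => MeasurableSet.iInter fun hj =>
      MeasurableSet.iUnion fun i => MeasurableSet.iUnion fun hi => ?_
    have hmem := hbox _ (site_mem_box hi hj)
    exact (measurableSet_cyl1 hmem.1 true).inter (measurableSet_cyl2 hmem.2 true)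
  · refine MeasurableSet.iInter fun i => MeasurableSet.iInter fun hi =>
      MeasurableSet.iUnion fun j => MeasurableSet.iUnion fun hj => ?_
    have hmem := hbox _ (site_mem_box hi hj)
    exact (measurableSet_cyl1 hmem.1 true).inter (measurableSet_cyl2 hmem.2 true)

lemma FS_child_subset (L m : ℕ) (v : Site) (a : Cell) :
    FS L m (child v a) ⊆ FS L (m+1) v :=
  Set.subset_iUnion (fun a => FS L m (child v a)) a

lemma suppI_child_subset (L m : ℕ) (v : Site) (a : Cell) :
    SuppI L m (child v a) ⊆ SuppI L (m+1) v :=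
  Set.union_subset_union (Set.image_mono (FS_child_subset L m v a))
    (Set.image_mono (FS_child_subset L m v a))

lemma measurableSet_goodH {L : ℕ} : ∀ (m : ℕ) (v : Site) {S : Set (Site ⊕ Site)},
    SuppI L m v ⊆ S →
    MeasurableSet[coordMS S] {s : EnvCfg | GoodH (fun w => GoodBox L s w) m v} := by
  intro m
  induction m with
  | zero => intro v S hS; exact measurableSet_goodBox hS
  | succ m ih =>
    intro v S hS
    have key : {s : EnvCfg | GoodH (fun w => GoodBox L s w) (m+1) v} =
        ⋂ (a : Cell) (b : Cell),
          ({s : EnvCfg | GoodH (fun w => GoodBox L s w) m (child v a)} ∪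
           {s : EnvCfg | GoodH (fun w => GoodBox L s w) m (child v b)} ∪
           {_s : EnvCfg | a = b}) := by
      ext s
      simp only [Set.mem_iInter, Set.mem_union, Set.mem_setOf_eq]
      constructor
      · intro h a b
        by_cases ha : GoodH (fun w => GoodBox L s w) m (child v a)
        · exact Or.inl (Or.inl ha)
        · by_cases hb : GoodH (fun w => GoodBox L s w) m (child v b)
          · exact Or.inl (Or.inr hb)
          · exact Or.inr (h a b ha hb)
      · intro h a b ha hb
        rcases h a b with (h' | h') | h'
        · exact absurd h' ha
        · exact absurd h' hb
        · exact h'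
    rw [key]
    refine MeasurableSet.iInter fun a => MeasurableSet.iInter fun b => ?_
    refine MeasurableSet.union (MeasurableSet.union ?_ ?_) ?_
    · exact ih (child v a) (le_trans (suppI_child_subset L m v a) (le_of_eq rfl) |>.trans hS)
    · exact ih (child v b) ((suppI_child_subset L m v b).trans hS)
    · exact MeasurableSet.const (a = b)

lemma measurableSet_goodH' {L : ℕ} (m : ℕ) (v : Site) :
    MeasurableSet {s : EnvCfg | GoodH (fun w => GoodBox L s w) m v} :=
  ms_le_apply (coordMS_le _) (measurableSet_goodH m v (Set.Subset.refl _))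

/-! ### probability estimates -/

open scoped ENNReal

section Prob

variable {P : Measure EnvCfg} [IsProbabilityMeasure P]

lemma indep_coordMS
    (hind : iIndepFun (β := fun _ : Site ⊕ Site => Bool)
      (fun i s => Sum.elim (fun x => (s x).1) (fun x => (s x).2) i) P)
    {S T : Set (Site ⊕ Site)} (hST : Disjoint S T) {A B : Set EnvCfg}
    (hA : MeasurableSet[coordMS S] A) (hB : MeasurableSet[coordMS T] B) :
    P (A ∩ B) = P A * P B := by
  have h1 : iIndep (fun i => MeasurableSpace.comap (coordF i) inferInstance) P := hind.iIndep
  have h2 := ProbabilityTheory.indep_iSup_of_disjoint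
    (fun i => (coordF_measurable i).comap_le) h1 hST
  exact ((ProbabilityTheory.Indep_iff _ _ _).1 h2) A B hA hB

lemma coin_true_eq {q : ℝ}
    (hq : ∀ x : Site, (P {s | (s x).2 = true}).toReal = q) (x : Site) :
    P {s : EnvCfg | (s x).2 = true} = ENNReal.ofReal q := by
  rw [← hq x, ENNReal.ofReal_toReal (measure_ne_top P _)]

lemma coin_false_eq {q : ℝ} (hq0 : 0 ≤ q)
    (hq : ∀ x : Site, (P {s | (s x).2 = true}).toReal = q) (x : Site) :
    P {s : EnvCfg | (s x).2 = false} = ENNReal.ofReal (1 - q) := by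
  have hmeas : MeasurableSet {s : EnvCfg | (s x).2 = true} :=
    (measurable_snd.comp (measurable_pi_apply x)) (measurableSet_singleton true)
  have hcomp : {s : EnvCfg | (s x).2 = false} = {s : EnvCfg | (s x).2 = true}ᶜ := by
    ext s; simp
  rw [hcomp, prob_compl_eq_one_sub hmeas, coin_true_eq hq x, ← ENNReal.ofReal_one,
    ← ENNReal.ofReal_sub _ hq0]

lemma immune_eq {π : ℝ}
    (hπ : ∀ x : Site, (P {s | (s x).1 = false}).toReal = π) (x : Site) :
    P {s : EnvCfg | (s x).1 = false} = ENNReal.ofReal π := by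
  rw [← hπ x, ENNReal.ofReal_toReal (measure_ne_top P _)]

lemma coins_false_prod {q : ℝ} (hq0 : 0 ≤ q)
    (hind : iIndepFun (β := fun _ : Site ⊕ Site => Bool)
      (fun i s => Sum.elim (fun x => (s x).1) (fun x => (s x).2) i) P)
    (hq : ∀ x : Site, (P {s | (s x).2 = true}).toReal = q) (T : Finset Site) :
    P (⋂ x ∈ T, {s : EnvCfg | (s x).2 = false}) = ENNReal.ofReal (1 - q) ^ T.card := by
  classical
  have key := hind.meas_biInter (S := T.image Sum.inr)
    (s := fun i => coordF i ⁻¹' {false}) (fun i _ => ⟨{false}, trivial, rfl⟩)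
  have e1 : (⋂ i ∈ T.image Sum.inr, coordF i ⁻¹' {false}) =
      ⋂ x ∈ T, {s : EnvCfg | (s x).2 = false} := by
    ext s
    simp only [Set.mem_iInter, Finset.mem_image, forall_exists_index, and_imp,
      Set.mem_preimage, Set.mem_singleton_iff, Set.mem_setOf_eq]
    constructor
    · intro h x hx
      exact h (Sum.inr x) x hx rfl
    · rintro h i x hx rfl
      exact h x hx
  rw [e1] at key
  rw [key, Finset.prod_image (fun a _ b _ h => Sum.inr_injective h)]
  have : ∀ x ∈ T, P (coordF (Sum.inr x) ⁻¹' {false}) = ENNReal.ofReal (1 - q) := by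
    intro x _
    exact coin_false_eq hq0 hq x
  rw [Finset.prod_congr rfl this, Finset.prod_const]

def bsite (L : ℕ) (v : Site) (i j : ℕ) : Site := ((L : ℤ) * v.1 + i, (L : ℤ) * v.2 + j)

lemma badBox_subset (L : ℕ) (v : Site) :
    {s : EnvCfg | ¬ GoodBox L s v} ⊆
      (⋃ p ∈ Finset.range L ×ˢ Finset.range L,
        {s : EnvCfg | (s (bsite L v p.1 p.2)).1 = false}) ∪
      (⋃ j ∈ Finset.range L, ⋂ i ∈ Finset.range L,
        {s : EnvCfg | (s (bsite L v i j)).2 = false}) ∪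
      (⋃ i ∈ Finset.range L, ⋂ j ∈ Finset.range L,
        {s : EnvCfg | (s (bsite L v i j)).2 = false}) := by
  intro s hs
  by_contra hmem
  apply hs
  rw [Set.mem_union, Set.mem_union] at hmem
  push_neg at hmem
  obtain ⟨⟨hA, hB⟩, hC⟩ := hmem
  simp only [Set.mem_iUnion, not_exists, Set.mem_setOf_eq, Finset.mem_product,
    Finset.mem_range, Set.mem_iInter] at hA hB hC
  have hsusc : ∀ i j : ℕ, i < L → j < L → (s (bsite L v i j)).1 = true := by
    intro i j hi hj
    have := hA (i, j) ⟨hi, hj⟩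
    revert this
    cases (s (bsite L v i j)).1 <;> simp
  refine ⟨?_, ?_, ?_⟩
  · intro y hy
    obtain ⟨h1, h2, h3, h4⟩ := hy
    have hi : ((y.1 - (L:ℤ) * v.1).toNat : ℤ) = y.1 - (L:ℤ) * v.1 :=
      Int.toNat_of_nonneg (by omega)
    have hj : ((y.2 - (L:ℤ) * v.2).toNat : ℤ) = y.2 - (L:ℤ) * v.2 :=
      Int.toNat_of_nonneg (by omega)
    have hiL : (y.1 - (L:ℤ) * v.1).toNat < L := by omega
    have hjL : (y.2 - (L:ℤ) * v.2).toNat < L := by omega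
    have hy' : bsite L v (y.1 - (L:ℤ) * v.1).toNat (y.2 - (L:ℤ) * v.2).toNat = y := by
      unfold bsite
      refine Prod.ext ?_ ?_ <;> simp only [] <;> omega
    have := hsusc _ _ hiL hjL
    rw [hy'] at this
    exact this
  · intro j hj
    push_neg at hB
    obtain ⟨i, hi, hne⟩ := hB j hj
    have h2 : (s (bsite L v i j)).2 = true := by
      revert hne; cases (s (bsite L v i j)).2 <;> simp
    exact ⟨i, hi, hsusc i j hi hj, h2⟩
  · intro i hi
    push_neg at hC
    obtain ⟨j, hj, hne⟩ := hC i hi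
    have h2 : (s (bsite L v i j)).2 = true := by
      revert hne; cases (s (bsite L v i j)).2 <;> simp
    exact ⟨j, hj, hsusc i j hi hj, h2⟩

lemma badBox_bound {L : ℕ} {q π : ℝ} (hq0 : 0 ≤ q) (hq1 : q ≤ 1) (hπ0 : 0 ≤ π)
    (hind : iIndepFun (β := fun _ : Site ⊕ Site => Bool)
      (fun i s => Sum.elim (fun x => (s x).1) (fun x => (s x).2) i) P)
    (hπ : ∀ x : Site, (P {s | (s x).1 = false}).toReal = π)
    (hq : ∀ x : Site, (P {s | (s x).2 = true}).toReal = q) (v : Site) :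
    P {s : EnvCfg | ¬ GoodBox L s v} ≤
      ENNReal.ofReal ((L:ℝ)^2 * π + 2 * L * (1 - q)^L) := by
  classical
  have hrow : ∀ j : ℕ, P (⋂ i ∈ Finset.range L, {s : EnvCfg | (s (bsite L v i j)).2 = false})
      = ENNReal.ofReal ((1 - q)^L) := by
    intro j
    have hinj : ∀ a ∈ Finset.range L, ∀ b ∈ Finset.range L,
        bsite L v a j = bsite L v b j → a = b := by
      intro a _ b _ h
      have := congrArg Prod.fst h
      simp only [bsite] at this
      omega
    have e : (⋂ i ∈ Finset.range L, {s : EnvCfg | (s (bsite L v i j)).2 = false}) =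
        ⋂ x ∈ (Finset.range L).image (fun i => bsite L v i j),
          {s : EnvCfg | (s x).2 = false} := by
      ext s
      simp only [Set.mem_iInter, Finset.mem_image]
      constructor
      · rintro h x ⟨i, hi, rfl⟩
        exact h i hi
      · intro h i hi
        exact h _ ⟨i, hi, rfl⟩
    rw [e, coins_false_prod hq0 hind hq, Finset.card_image_of_injOn hinj,
      Finset.card_range, ENNReal.ofReal_pow (by linarith)]
  have hcol : ∀ i : ℕ, P (⋂ j ∈ Finset.range L, {s : EnvCfg | (s (bsite L v i j)).2 = false})
      = ENNReal.ofReal ((1 - q)^L) := by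
    intro i
    have hinj : ∀ a ∈ Finset.range L, ∀ b ∈ Finset.range L,
        bsite L v i a = bsite L v i b → a = b := by
      intro a _ b _ h
      have := congrArg Prod.snd h
      simp only [bsite] at this
      omega
    have e : (⋂ j ∈ Finset.range L, {s : EnvCfg | (s (bsite L v i j)).2 = false}) =
        ⋂ x ∈ (Finset.range L).image (fun j => bsite L v i j),
          {s : EnvCfg | (s x).2 = false} := by
      ext s
      simp only [Set.mem_iInter, Finset.mem_image]
      constructor
      · rintro h x ⟨j, hj, rfl⟩
        exact h j hj
      · intro h j hj
        exact h _ ⟨j, hj, rfl⟩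
    rw [e, coins_false_prod hq0 hind hq, Finset.card_image_of_injOn hinj,
      Finset.card_range, ENNReal.ofReal_pow (by linarith)]
  calc P {s : EnvCfg | ¬ GoodBox L s v}
      ≤ P ((⋃ p ∈ Finset.range L ×ˢ Finset.range L,
          {s : EnvCfg | (s (bsite L v p.1 p.2)).1 = false}) ∪
        (⋃ j ∈ Finset.range L, ⋂ i ∈ Finset.range L,
          {s : EnvCfg | (s (bsite L v i j)).2 = false}) ∪
        (⋃ i ∈ Finset.range L, ⋂ j ∈ Finset.range L,
          {s : EnvCfg | (s (bsite L v i j)).2 = false})) := measure_mono (badBox_subset L v)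
    _ ≤ P ((⋃ p ∈ Finset.range L ×ˢ Finset.range L,
          {s : EnvCfg | (s (bsite L v p.1 p.2)).1 = false}) ∪
        (⋃ j ∈ Finset.range L, ⋂ i ∈ Finset.range L,
          {s : EnvCfg | (s (bsite L v i j)).2 = false})) +
        P (⋃ i ∈ Finset.range L, ⋂ j ∈ Finset.range L,
          {s : EnvCfg | (s (bsite L v i j)).2 = false}) := measure_union_le _ _
    _ ≤ (P (⋃ p ∈ Finset.range L ×ˢ Finset.range L,
          {s : EnvCfg | (s (bsite L v p.1 p.2)).1 = false}) +
        P (⋃ j ∈ Finset.range L, ⋂ i ∈ Finset.range L,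
          {s : EnvCfg | (s (bsite L v i j)).2 = false})) +
        P (⋃ i ∈ Finset.range L, ⋂ j ∈ Finset.range L,
          {s : EnvCfg | (s (bsite L v i j)).2 = false}) := by
        gcongr
        exact measure_union_le _ _
    _ ≤ ((L : ℝ≥0∞) * (L : ℝ≥0∞) * ENNReal.ofReal π + (L : ℝ≥0∞) * ENNReal.ofReal ((1-q)^L))
        + (L : ℝ≥0∞) * ENNReal.ofReal ((1-q)^L) := by
        gcongr
        · calc P (⋃ p ∈ Finset.range L ×ˢ Finset.range L,
              {s : EnvCfg | (s (bsite L v p.1 p.2)).1 = false})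
              ≤ ∑ p ∈ Finset.range L ×ˢ Finset.range L,
                P {s : EnvCfg | (s (bsite L v p.1 p.2)).1 = false} :=
                measure_biUnion_finset_le _ _
            _ = ∑ _p ∈ Finset.range L ×ˢ Finset.range L, ENNReal.ofReal π :=
                Finset.sum_congr rfl (fun p _ => immune_eq hπ _)
            _ = (L : ℝ≥0∞) * (L : ℝ≥0∞) * ENNReal.ofReal π := by
                rw [Finset.sum_const, Finset.card_product, Finset.card_range]
                simp [nsmul_eq_mul, mul_assoc]
        · calc P (⋃ j ∈ Finset.range L, ⋂ i ∈ Finset.range L,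
              {s : EnvCfg | (s (bsite L v i j)).2 = false})
              ≤ ∑ j ∈ Finset.range L, P (⋂ i ∈ Finset.range L,
                {s : EnvCfg | (s (bsite L v i j)).2 = false}) := measure_biUnion_finset_le _ _
            _ = ∑ _j ∈ Finset.range L, ENNReal.ofReal ((1-q)^L) :=
                Finset.sum_congr rfl (fun j _ => hrow j)
            _ = (L : ℝ≥0∞) * ENNReal.ofReal ((1-q)^L) := by
                rw [Finset.sum_const, Finset.card_range, nsmul_eq_mul]
        · calc P (⋃ i ∈ Finset.range L, ⋂ j ∈ Finset.range L,
              {s : EnvCfg | (s (bsite L v i j)).2 = false})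
              ≤ ∑ i ∈ Finset.range L, P (⋂ j ∈ Finset.range L,
                {s : EnvCfg | (s (bsite L v i j)).2 = false}) := measure_biUnion_finset_le _ _
            _ = ∑ _i ∈ Finset.range L, ENNReal.ofReal ((1-q)^L) :=
                Finset.sum_congr rfl (fun i _ => hcol i)
            _ = (L : ℝ≥0∞) * ENNReal.ofReal ((1-q)^L) := by
                rw [Finset.sum_const, Finset.card_range, nsmul_eq_mul]
    _ = ENNReal.ofReal ((L:ℝ)^2 * π + 2 * L * (1 - q)^L) := by
        have hL0 : (0:ℝ) ≤ (L:ℝ) := Nat.cast_nonneg L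
        have h1q : (0:ℝ) ≤ (1-q)^L := pow_nonneg (by linarith) L
        have e3 : (L:ℝ)^2 * π + 2 * L * (1 - q)^L =
            (L:ℝ)^2*π + ((L:ℝ)*(1-q)^L + (L:ℝ)*(1-q)^L) := by ring
        have e1 : ENNReal.ofReal ((L:ℝ)^2 * π) = (L:ℝ≥0∞) * L * ENNReal.ofReal π := by
          rw [sq, ENNReal.ofReal_mul (by positivity), ENNReal.ofReal_mul hL0,
            ENNReal.ofReal_natCast]
        have e2 : ENNReal.ofReal ((L:ℝ) * (1-q)^L) = (L:ℝ≥0∞) * ENNReal.ofReal ((1-q)^L) := by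
          rw [ENNReal.ofReal_mul hL0, ENNReal.ofReal_natCast]
        rw [e3, ENNReal.ofReal_add (by positivity) (by positivity),
          ENNReal.ofReal_add (by positivity) (by positivity), e1, e2]
        ring
end Prob

section Prob2

open scoped ENNReal

variable {P : Measure EnvCfg} [IsProbabilityMeasure P]

lemma badH_bound {L : ℕ} (hL : 0 < L) {b : ℝ} (hb0 : 0 ≤ b) (hsmall : 144 * b ≤ 1)
    (hind : iIndepFun (β := fun _ : Site ⊕ Site => Bool)
      (fun i s => Sum.elim (fun x => (s x).1) (fun x => (s x).2) i) P)
    (hbase : ∀ v : Site, P {s : EnvCfg | ¬ GoodBox L s v} ≤ ENNReal.ofReal b) :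
    ∀ (m : ℕ) (v : Site), P {s : EnvCfg | ¬ GoodH (fun w => GoodBox L s w) m v} ≤
      ENNReal.ofReal (b * (2⁻¹:ℝ)^m) := by
  intro m
  induction m with
  | zero =>
    intro v
    simpa [GoodH] using hbase v
  | succ m ih =>
    intro v
    classical
    have hsubev : {s : EnvCfg | ¬ GoodH (fun w => GoodBox L s w) (m+1) v} ⊆
        ⋃ p ∈ (Finset.univ.offDiag : Finset (Cell × Cell)),
          ({s : EnvCfg | ¬ GoodH (fun w => GoodBox L s w) m (child v p.1)} ∩
           {s : EnvCfg | ¬ GoodH (fun w => GoodBox L s w) m (child v p.2)}) := by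
      intro s hs
      simp only [Set.mem_setOf_eq, GoodH] at hs
      push_neg at hs
      obtain ⟨a, c, ha, hc, hne⟩ := hs
      exact Set.mem_iUnion.2 ⟨(a, c), Set.mem_iUnion.2
        ⟨Finset.mem_offDiag.2 ⟨Finset.mem_univ _, Finset.mem_univ _, hne⟩, ha, hc⟩⟩
    have hterm : ∀ p ∈ (Finset.univ.offDiag : Finset (Cell × Cell)),
        P ({s : EnvCfg | ¬ GoodH (fun w => GoodBox L s w) m (child v p.1)} ∩
           {s : EnvCfg | ¬ GoodH (fun w => GoodBox L s w) m (child v p.2)}) ≤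
        ENNReal.ofReal (b * (2⁻¹:ℝ)^m) * ENNReal.ofReal (b * (2⁻¹:ℝ)^m) := by
      intro p hp
      have hne : p.1 ≠ p.2 := (Finset.mem_offDiag.1 hp).2.2
      have hcne : child v p.1 ≠ child v p.2 := fun h => hne (child_injective h)
      have hdis := suppI_disjoint hL (m := m) hcne
      have h1 : MeasurableSet[coordMS (SuppI L m (child v p.1))]
          {s : EnvCfg | ¬ GoodH (fun w => GoodBox L s w) m (child v p.1)} :=
        (measurableSet_goodH (L := L) m (child v p.1) (Set.Subset.refl _)).compl
      have h2 : MeasurableSet[coordMS (SuppI L m (child v p.2))]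
          {s : EnvCfg | ¬ GoodH (fun w => GoodBox L s w) m (child v p.2)} :=
        (measurableSet_goodH (L := L) m (child v p.2) (Set.Subset.refl _)).compl
      rw [indep_coordMS hind hdis h1 h2]
      exact mul_le_mul' (ih _) (ih _)
    calc P {s : EnvCfg | ¬ GoodH (fun w => GoodBox L s w) (m+1) v}
        ≤ P (⋃ p ∈ (Finset.univ.offDiag : Finset (Cell × Cell)),
          ({s : EnvCfg | ¬ GoodH (fun w => GoodBox L s w) m (child v p.1)} ∩
           {s : EnvCfg | ¬ GoodH (fun w => GoodBox L s w) m (child v p.2)})) :=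
          measure_mono hsubev
      _ ≤ ∑ p ∈ (Finset.univ.offDiag : Finset (Cell × Cell)),
          P ({s : EnvCfg | ¬ GoodH (fun w => GoodBox L s w) m (child v p.1)} ∩
             {s : EnvCfg | ¬ GoodH (fun w => GoodBox L s w) m (child v p.2)}) :=
          measure_biUnion_finset_le _ _
      _ ≤ ∑ _p ∈ (Finset.univ.offDiag : Finset (Cell × Cell)),
          ENNReal.ofReal (b * (2⁻¹:ℝ)^m) * ENNReal.ofReal (b * (2⁻¹:ℝ)^m) :=
          Finset.sum_le_sum hterm
      _ = 72 * (ENNReal.ofReal (b * (2⁻¹:ℝ)^m) * ENNReal.ofReal (b * (2⁻¹:ℝ)^m)) := by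
          rw [Finset.sum_const, nsmul_eq_mul]
          have : (Finset.univ.offDiag : Finset (Cell × Cell)).card = 72 := by decide
          rw [this]
          norm_num
      _ ≤ ENNReal.ofReal (b * (2⁻¹:ℝ)^(m+1)) := by
          rw [← ENNReal.ofReal_mul (by positivity)]
          have h72 : (72 : ℝ≥0∞) = ENNReal.ofReal 72 := by
            rw [ENNReal.ofReal_ofNat]
          rw [h72, ← ENNReal.ofReal_mul (by norm_num)]
          apply ENNReal.ofReal_le_ofReal
          have ht0 : (0:ℝ) ≤ (2⁻¹:ℝ)^m := by positivity
          have ht1 : (2⁻¹:ℝ)^m ≤ 1 := pow_le_one₀ (by norm_num) (by norm_num)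
          have key : 72 * (b * (2⁻¹:ℝ)^m * (b * (2⁻¹:ℝ)^m)) =
              (144 * b * (2⁻¹:ℝ)^m) * (b * (2⁻¹:ℝ)^m) * 2⁻¹ := by ring
          rw [key, pow_succ]
          have h144 : 144 * b * (2⁻¹:ℝ)^m ≤ 1 := by nlinarith
          nlinarith [mul_nonneg hb0 ht0]

lemma badAll_bound {L : ℕ} (hL : 0 < L) {b : ℝ} (hb0 : 0 ≤ b) (hsmall : 144 * b ≤ 1)
    (hind : iIndepFun (β := fun _ : Site ⊕ Site => Bool)
      (fun i s => Sum.elim (fun x => (s x).1) (fun x => (s x).2) i) P)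
    (hbase : ∀ v : Site, P {s : EnvCfg | ¬ GoodBox L s v} ≤ ENNReal.ofReal b) :
    P (⋃ m : ℕ, {s : EnvCfg | ¬ GoodH (fun w => GoodBox L s w) m ((0:ℤ), (0:ℤ))}) ≤
      ENNReal.ofReal (2 * b) := by
  calc P (⋃ m : ℕ, {s : EnvCfg | ¬ GoodH (fun w => GoodBox L s w) m ((0:ℤ), (0:ℤ))})
      ≤ ∑' m : ℕ, P {s : EnvCfg | ¬ GoodH (fun w => GoodBox L s w) m ((0:ℤ), (0:ℤ))} :=
        measure_iUnion_le _
    _ ≤ ∑' m : ℕ, ENNReal.ofReal (b * (2⁻¹:ℝ)^m) :=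
        ENNReal.tsum_le_tsum (fun m => badH_bound hL hb0 hsmall hind hbase m _)
    _ = ∑' m : ℕ, ENNReal.ofReal b * (2⁻¹ : ℝ≥0∞)^m := by
        congr 1
        funext m
        rw [ENNReal.ofReal_mul hb0, ENNReal.ofReal_pow (by norm_num)]
        congr 2
        rw [ENNReal.ofReal_inv_of_pos (by norm_num), ENNReal.ofReal_ofNat]
    _ = ENNReal.ofReal b * ∑' m : ℕ, (2⁻¹ : ℝ≥0∞)^m := ENNReal.tsum_mul_left
    _ = ENNReal.ofReal b * 2 := by
        rw [ENNReal.tsum_geometric]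
        congr 1
        rw [ENNReal.one_sub_inv_two]
        simp
    _ = ENNReal.ofReal (2 * b) := by
        rw [ENNReal.ofReal_mul (by norm_num), ENNReal.ofReal_ofNat]
        ring

end Prob2

theorem origin_in_infinite_good_cluster (ε : ℝ) (hε : 0 < ε) :
    ∃ q₀ : ℝ, 0 < q₀ ∧ ∀ q : ℝ, 0 < q → q < q₀ → ∀ π : ℝ, 0 < π → π < q ^ (2 + ε) →
    ∀ P : Measure EnvCfg, IsProbabilityMeasure P →
    iIndepFun (β := fun _ : Site ⊕ Site => Bool)
      (fun i s => Sum.elim (fun x => (s x).1) (fun x => (s x).2) i) P →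
    (∀ x : Site, (P {s | (s x).1 = false}).toReal = π) →
    (∀ x : Site, (P {s | (s x).2 = true}).toReal = q) →
    1 - 16 * q ^ (ε / 3) ≤
      (P {s | OriginInInfiniteGoodCluster (⌊q ^ (-(1 + ε / 3))⌋₊) s}).toReal := by
  set δ := ε / 3 with hδdef
  have hδ : 0 < δ := by rw [hδdef]; linarith
  set K : ℕ := ⌈(1 + δ) / δ⌉₊ with hK
  set M : ℝ := max 288 (2 * Real.exp 1 * (Nat.factorial (K + 3))) with hMdef
  have hM288 : (288 : ℝ) ≤ M := le_max_left _ _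
  have hMbig : 2 * Real.exp 1 * (Nat.factorial (K + 3)) ≤ M := le_max_right _ _
  have hM0 : (0:ℝ) < M := lt_of_lt_of_le (by norm_num) hM288
  refine ⟨min (1/2) (M ^ (-(1/δ))), lt_min (by norm_num) (Real.rpow_pos_of_pos hM0 _), ?_⟩
  intro q hq0 hqlt π hπ0 hπlt P hP hind hπeq hqeq
  have hqhalf : q < 1/2 := lt_of_lt_of_le hqlt (min_le_left _ _)
  have hq1 : q ≤ 1 := by linarith
  -- q^δ is small
  have hqδ0 : (0:ℝ) < q ^ δ := Real.rpow_pos_of_pos hq0 δ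
  have hqδM : q ^ δ < M⁻¹ := by
    have h1 : q ^ δ < (M ^ (-(1/δ))) ^ δ :=
      Real.rpow_lt_rpow (le_of_lt hq0) (lt_of_lt_of_le hqlt (min_le_right _ _)) hδ
    have h2 : (M ^ (-(1/δ))) ^ δ = M ^ ((-(1/δ)) * δ) := (Real.rpow_mul (le_of_lt hM0) _ _).symm
    have h3 : (-(1/δ)) * δ = -1 := by field_simp
    rw [h2, h3, Real.rpow_neg_one] at h1
    exact h1
  have hM1 : M⁻¹ ≤ 1/288 := by
    rw [show (1:ℝ)/288 = (288:ℝ)⁻¹ by norm_num]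
    exact inv_anti₀ (by norm_num) hM288
  have hqδsmall : q ^ δ ≤ 1/288 := le_trans (le_of_lt hqδM) hM1
  -- the scale L
  set L : ℕ := ⌊q ^ (-(1 + δ))⌋₊ with hLdef
  have hrpow_pos : (0:ℝ) < q ^ (-(1 + δ)) := Real.rpow_pos_of_pos hq0 _
  have hone_le : (1:ℝ) ≤ q ^ (-(1 + δ)) :=
    Real.one_le_rpow_of_pos_of_le_one_of_nonpos hq0 hq1 (by linarith)
  have hL1 : 1 ≤ L := Nat.le_floor (by exact_mod_cast hone_le)
  have hL0 : 0 < L := hL1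
  have hLle : (L:ℝ) ≤ q ^ (-(1 + δ)) := Nat.floor_le (le_of_lt hrpow_pos)
  have hLgt : q ^ (-(1 + δ)) - 1 < (L:ℝ) := Nat.sub_one_lt_floor _
  -- x = q^{-δ}
  set x : ℝ := q ^ (-δ) with hxdef
  have hxinv : x = (q ^ δ)⁻¹ := by rw [hxdef, Real.rpow_neg (le_of_lt hq0)]
  have hx0 : (0:ℝ) < x := Real.rpow_pos_of_pos hq0 _
  have hxM : M < x := by
    rw [hxinv, ← inv_inv M]
    exact inv_strictAnti₀ (by positivity) hqδM
  have hx1 : (1:ℝ) ≤ x := by linarith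
  -- bound : L² π ≤ q^δ
  have hb1 : (L:ℝ)^2 * π ≤ q ^ δ := by
    have h1 : (L:ℝ)^2 ≤ (q ^ (-(1 + δ)))^2 := pow_le_pow_left₀ (Nat.cast_nonneg L) hLle 2
    have h2 : (q ^ (-(1 + δ)))^2 = q ^ (-(2 + 2*δ)) := by
      rw [sq, ← Real.rpow_add hq0]
      congr 1
      ring
    have h3 : π ≤ q ^ (2 + ε) := le_of_lt hπlt
    have h4 : (L:ℝ)^2 * π ≤ q ^ (-(2 + 2*δ)) * q ^ (2 + ε) := by
      apply mul_le_mul (h2 ▸ h1) h3 (le_of_lt hπ0)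
      positivity
    have h5 : q ^ (-(2 + 2*δ)) * q ^ (2 + ε) = q ^ δ := by
      rw [← Real.rpow_add hq0]
      congr 1
      rw [hδdef]
      ring
    linarith [h4, h5.le]
  -- bound : 2 L (1-q)^L ≤ q^δ
  have hb2 : 2 * (L:ℝ) * (1 - q)^L ≤ q ^ δ := by
    have hexp1 : (1 - q)^L ≤ Real.exp (-(q * L)) := by
      have h1 : 1 - q ≤ Real.exp (-q) := by
        have := Real.add_one_le_exp (-q)
        linarith
      calc (1 - q)^L ≤ (Real.exp (-q))^L := pow_le_pow_left₀ (by linarith) h1 L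
        _ = Real.exp ((L:ℝ) * (-q)) := (Real.exp_nat_mul _ L).symm
        _ = Real.exp (-(q * L)) := by ring_nf
    have hqL : x - 1 ≤ q * L := by
      have h1 : q * (q ^ (-(1 + δ)) - 1) ≤ q * L :=
        mul_le_mul_of_nonneg_left (le_of_lt hLgt) (le_of_lt hq0)
      have h2 : q * q ^ (-(1 + δ)) = x := by
        rw [hxdef]
        nth_rewrite 1 [← Real.rpow_one q]
        rw [← Real.rpow_add hq0]
        congr 1
        ring
      nlinarith
    have hexp2 : Real.exp (-(q * L)) ≤ Real.exp 1 * Real.exp (-x) := by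
      rw [← Real.exp_add]
      apply Real.exp_le_exp.2
      linarith
    have hLx : (L:ℝ) ≤ x ^ (K+1) := by
      have h1 : q ^ (-(1 + δ)) = x ^ ((1 + δ)/δ) := by
        rw [hxdef, ← Real.rpow_mul (le_of_lt hq0)]
        congr 1
        field_simp
      have h2 : x ^ ((1 + δ)/δ) ≤ x ^ ((K:ℝ)) :=
        Real.rpow_le_rpow_of_exponent_le hx1 (Nat.le_ceil _)
      have h3 : x ^ ((K:ℝ)) = x ^ K := Real.rpow_natCast x K
      have h4 : x ^ K ≤ x ^ (K+1) := pow_le_pow_right₀ hx1 (Nat.le_succ K)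
      calc (L:ℝ) ≤ q ^ (-(1 + δ)) := hLle
        _ = x ^ ((1 + δ)/δ) := h1
        _ ≤ x ^ ((K:ℝ)) := h2
        _ = x ^ K := h3
        _ ≤ x ^ (K+1) := h4
    have hcross : 2 * Real.exp 1 * x ^ (K + 2) ≤ Real.exp x := by
      have hfact : (0:ℝ) < (Nat.factorial (K+3) : ℝ) := by
        exact_mod_cast Nat.factorial_pos (K+3)
      have hsum := Real.sum_le_exp_of_nonneg (le_of_lt hx0) (K+4)
      have hterm : x^(K+3)/(Nat.factorial (K+3) : ℝ) ≤
          ∑ i ∈ Finset.range (K+4), x^i/(Nat.factorial i : ℝ) := by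
        apply Finset.single_le_sum (f := fun i => x^i/(Nat.factorial i : ℝ))
        · intro i _
          positivity
        · exact Finset.mem_range.2 (by omega)
      have hstep : 2 * Real.exp 1 * x ^ (K+2) ≤ x^(K+3)/(Nat.factorial (K+3) : ℝ) := by
        rw [le_div_iff₀ hfact]
        have hxbig : 2 * Real.exp 1 * (Nat.factorial (K + 3) : ℝ) ≤ x := le_of_lt
          (lt_of_le_of_lt hMbig hxM)
        calc 2 * Real.exp 1 * x ^ (K+2) * (Nat.factorial (K+3) : ℝ)
            = x^(K+2) * (2 * Real.exp 1 * (Nat.factorial (K+3) : ℝ)) := by ring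
          _ ≤ x^(K+2) * x := mul_le_mul_of_nonneg_left hxbig (by positivity)
          _ = x^(K+3) := by rw [← pow_succ]
      calc 2 * Real.exp 1 * x ^ (K + 2) ≤ x^(K+3)/(Nat.factorial (K+3) : ℝ) := hstep
        _ ≤ ∑ i ∈ Finset.range (K+4), x^i/(Nat.factorial i : ℝ) := hterm
        _ ≤ Real.exp x := hsum
    have hfin : 2 * x ^ (K + 1) * (Real.exp 1 * Real.exp (-x)) ≤ x⁻¹ := by
      have hgoal : (2 * x^(K+1) * Real.exp 1) / Real.exp x ≤ 1 / x := by
        rw [div_le_div_iff₀ (Real.exp_pos x) hx0]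
        calc 2*x^(K+1)*Real.exp 1 * x = 2*Real.exp 1 * x^(K+2) := by ring
          _ ≤ Real.exp x := hcross
          _ = 1 * Real.exp x := by ring
      calc 2 * x^(K+1) * (Real.exp 1 * Real.exp (-x))
          = (2*x^(K+1)*Real.exp 1)/Real.exp x := by
            rw [Real.exp_neg]
            ring
        _ ≤ 1/x := hgoal
        _ = x⁻¹ := (inv_eq_one_div x).symm
    have hq1L : (0:ℝ) ≤ (1-q)^L := pow_nonneg (by linarith) L
    have hchain : 2 * (L:ℝ) * (1 - q)^L ≤ 2 * x^(K+1) * (Real.exp 1 * Real.exp (-x)) := by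
      have t1 : (1-q)^L ≤ Real.exp 1 * Real.exp (-x) := le_trans hexp1 hexp2
      have t2 : 2 * (L:ℝ) ≤ 2 * x^(K+1) := by linarith
      apply mul_le_mul t2 t1 hq1L (by positivity)
    have hxq : x⁻¹ = q ^ δ := by rw [hxinv, inv_inv]
    linarith [hfin, hchain, hxq.le, hxq.ge]
  -- the base bad-box probability
  set b : ℝ := (L:ℝ)^2 * π + 2 * (L:ℝ) * (1 - q)^L with hbdef
  have hb0 : (0:ℝ) ≤ b := by
    have : (0:ℝ) ≤ (1-q)^L := pow_nonneg (by linarith) L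
    have hπ0' : (0:ℝ) ≤ π := le_of_lt hπ0
    positivity
  have hble : b ≤ 2 * q ^ δ := by rw [hbdef]; linarith
  have hbsmall : 144 * b ≤ 1 := by
    have : 144 * b ≤ 288 * q ^ δ := by linarith
    linarith [hqδsmall]
  have hbase : ∀ v : Site, P {s : EnvCfg | ¬ GoodBox L s v} ≤ ENNReal.ofReal b :=
    fun v => badBox_bound (le_of_lt hq0) hq1 (le_of_lt hπ0) hind hπeq hqeq v
  -- union over scales
  have hbadall := badAll_bound hL0 hb0 hbsmall hind hbase
  have hEbadMeas : MeasurableSet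
      (⋃ m : ℕ, {s : EnvCfg | ¬ GoodH (fun w => GoodBox L s w) m ((0:ℤ), (0:ℤ))}) :=
    MeasurableSet.iUnion (fun m => (measurableSet_goodH' m _).compl)
  have hsub : (⋃ m : ℕ, {s : EnvCfg | ¬ GoodH (fun w => GoodBox L s w) m ((0:ℤ), (0:ℤ))})ᶜ ⊆
      {s : EnvCfg | OriginInInfiniteGoodCluster L s} := by
    intro s hs
    simp only [Set.mem_compl_iff, Set.mem_iUnion, not_exists, Set.mem_setOf_eq, not_not] at hs
    exact origin_in_cluster_of_goodH L s hs
  have hPE : (1:ℝ≥0∞) - ENNReal.ofReal (2*b) ≤ P {s : EnvCfg | OriginInInfiniteGoodCluster L s} := by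
    calc (1:ℝ≥0∞) - ENNReal.ofReal (2*b)
        ≤ 1 - P (⋃ m : ℕ, {s : EnvCfg | ¬ GoodH (fun w => GoodBox L s w) m ((0:ℤ), (0:ℤ))}) :=
          tsub_le_tsub_left hbadall 1
      _ = P (⋃ m : ℕ, {s : EnvCfg | ¬ GoodH (fun w => GoodBox L s w) m ((0:ℤ), (0:ℤ))})ᶜ :=
          (prob_compl_eq_one_sub hEbadMeas).symm
      _ ≤ P {s : EnvCfg | OriginInInfiniteGoodCluster L s} := measure_mono hsub
  have h2b1 : ENNReal.ofReal (2*b) ≤ 1 := by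
    rw [ENNReal.ofReal_le_one]
    linarith
  have htReal : (1:ℝ) - 2*b ≤ (P {s : EnvCfg | OriginInInfiniteGoodCluster L s}).toReal := by
    have := ENNReal.toReal_mono (measure_ne_top P _) hPE
    rw [ENNReal.toReal_sub_of_le h2b1 (by norm_num), ENNReal.toReal_one,
      ENNReal.toReal_ofReal (by linarith)] at this
    exact this
  have hlast : (1:ℝ) - 16 * q ^ δ ≤ 1 - 2*b := by linarith
  linarith
end
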